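/- arXiv:1901.06055 — 10 statements merged into one kernel-verified Lean document; each statement's English description precedes it below -/
import Mathlib

section
/- Suppose X is an uncountable, zero-dimensional, Borel subspace of a Polish space. Then s(X) = s(2^ω), where 2^ω denotes the Cantor space. -/
open Cardinal Filter

/-- An open set `U` *splits* `A` if both `A ∩ U` and `A \ U` are infinite. -/
def Splits {X : Type*} (U A : Set X) : Prop := (A ∩ U).Infinite ∧ (A \ U).Infinite

/-- The splitting number of a topological space: the smallest cardinality of a family of
open sets splitting every infinite subset. -/
noncomputable def splittingNumber (X : Type*) [TopologicalSpace X] : Cardinal :=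
  sInf {c : Cardinal | ∃ 𝒰 : Set (Set X), (∀ U ∈ 𝒰, IsOpen U) ∧
    (∀ A : Set X, A.Infinite → ∃ U ∈ 𝒰, Splits U A) ∧ c = #𝒰}

/-- A space is zero-dimensional if it has a basis of clopen sets. -/
def ZeroDimensional (Y : Type*) [TopologicalSpace Y] : Prop :=
  ∃ B : Set (Set Y), (∀ U ∈ B, IsClopen U) ∧ TopologicalSpace.IsTopologicalBasis B

open Set Topology TopologicalSpace

section Helpers

lemma not_accPt_of_finite {Z : Type*} [TopologicalSpace Z] [T1Space Z] {F : Set Z}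
    (hF : F.Finite) (x : Z) : ¬ AccPt x (𝓟 F) := by
  rw [accPt_iff_nhds]
  push_neg
  refine ⟨(F \ {x})ᶜ, ((hF.subset diff_subset).isClosed).isOpen_compl.mem_nhds (by simp), ?_⟩
  rintro y ⟨hyc, hyF⟩
  by_contra hne
  exact hyc ⟨hyF, hne⟩

lemma accPt_nhds_infinite {Z : Type*} [TopologicalSpace Z] [T1Space Z] {A U : Set Z} {x : Z}
    (h : AccPt x (𝓟 A)) (hU : U ∈ 𝓝 x) : (U ∩ A).Infinite := by
  by_contra hfin
  rw [Set.not_infinite] at hfin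
  exact not_accPt_of_finite hfin x (h.nhds_inter hU)

lemma exists_splits {Z : Type*} [TopologicalSpace Z] [T2Space Z] {A : Set Z} (hA : A.Infinite) :
    ∃ U : Set Z, IsOpen U ∧ Splits U A := by
  classical
  by_cases hacc : ∃ y z : Z, y ≠ z ∧ AccPt y (𝓟 A) ∧ AccPt z (𝓟 A)
  · obtain ⟨y, z, hyz, hy, hz⟩ := hacc
    obtain ⟨u, v, hu, hv, hyu, hzv, huv⟩ := t2_separation hyz
    refine ⟨u, hu, ?_, ?_⟩
    · rw [Set.inter_comm]
      exact accPt_nhds_infinite hy (hu.mem_nhds hyu)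
    · have h1 : (v ∩ A).Infinite := accPt_nhds_infinite hz (hv.mem_nhds hzv)
      refine h1.mono ?_
      rintro w ⟨hwv, hwA⟩
      exact ⟨hwA, fun hwu => huv.ne_of_mem hwu hwv rfl⟩
  · push_neg at hacc
    set A' := {a ∈ A | ¬ AccPt a (𝓟 A)} with hA'def
    have hsub : ∀ y z : Z, AccPt y (𝓟 A) → AccPt z (𝓟 A) → y = z := by
      intro y z hy hz
      by_contra hne
      exact hacc y z hne hy hz
    have hA' : A'.Infinite := by
      by_cases h : ∃ y, AccPt y (𝓟 A)
      · obtain ⟨y, hy⟩ := h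
        have : A \ {y} ⊆ A' := by
          rintro a ⟨haA, hay⟩
          refine ⟨haA, fun ha => hay (hsub a y ha hy)⟩
        exact ((hA.diff (Set.finite_singleton y)).mono this)
      · push_neg at h
        exact hA.mono (fun a haA => ⟨haA, h a⟩)
    have hw : ∀ a : Z, ∃ w : Set Z, a ∈ A' → IsOpen w ∧ a ∈ w ∧ w ∩ A ⊆ {a} := by
      intro a
      by_cases ha : a ∈ A'
      · have hna : ¬ AccPt a (𝓟 A) := ha.2
        rw [accPt_iff_nhds] at hna
        push_neg at hna
        obtain ⟨U, hU, hUa⟩ := hna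
        obtain ⟨w, hwU, hwo, haw⟩ := mem_nhds_iff.mp hU
        refine ⟨w, fun _ => ⟨hwo, haw, ?_⟩⟩
        rintro y ⟨hyw, hyA⟩
        exact hUa y ⟨hwU hyw, hyA⟩
      · exact ⟨∅, fun h => absurd h ha⟩
    choose w hwspec using hw
    obtain ⟨e⟩ : Nonempty (ℕ ↪ A') := ⟨hA'.natEmbedding _⟩
    set S : Set Z := Set.range (fun n => (e (2 * n) : Z)) with hSdef
    set T : Set Z := Set.range (fun n => (e (2 * n + 1) : Z)) with hTdef
    have hSsub : S ⊆ A' := by rintro _ ⟨n, rfl⟩; exact (e (2 * n)).2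
    have hTsub : T ⊆ A' := by rintro _ ⟨n, rfl⟩; exact (e (2 * n + 1)).2
    have hinj : Function.Injective (fun n => (e n : Z)) := fun a b h =>
      e.injective (Subtype.ext h)
    have hST : Disjoint S T := by
      rw [Set.disjoint_left]
      rintro _ ⟨n, rfl⟩ ⟨m, hm⟩
      have := hinj hm
      omega
    refine ⟨⋃ a ∈ S, w a, isOpen_biUnion (fun a ha => (hwspec a (hSsub ha)).1), ?_, ?_⟩
    · have : S ⊆ A ∩ ⋃ a ∈ S, w a := by
        intro a ha
        exact ⟨(hSsub ha).1, Set.mem_biUnion ha (hwspec a (hSsub ha)).2.1⟩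
      refine (Set.infinite_range_of_injective ?_).mono this
      intro a b h
      have := hinj h
      omega
    · have hT' : T ⊆ A \ ⋃ a ∈ S, w a := by
        intro t ht
        refine ⟨(hTsub ht).1, ?_⟩
        intro htU
        simp only [Set.mem_iUnion, exists_prop] at htU
        obtain ⟨a, haS, htw⟩ := htU
        have : t = a := (hwspec a (hSsub haS)).2.2 ⟨htw, (hTsub ht).1⟩
        exact (hST.ne_of_mem haS ht this.symm)
      refine (Set.infinite_range_of_injective ?_).mono hT'
      intro a b h
      have := hinj h
      omega

end Helpers
section Transfer

universe v w

lemma splittingNumber_le_of_isEmbedding {Y : Type v} {Z : Type w} [TopologicalSpace Y]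
    [TopologicalSpace Z] [T2Space Z] {e : Y → Z} (he : IsEmbedding e) :
    Cardinal.lift.{w} (splittingNumber Y) ≤ Cardinal.lift.{v} (splittingNumber Z) := by
  classical
  set SZ := {c : Cardinal | ∃ 𝒰 : Set (Set Z), (∀ U ∈ 𝒰, IsOpen U) ∧
    (∀ A : Set Z, A.Infinite → ∃ U ∈ 𝒰, Splits U A) ∧ c = #𝒰} with hSZ
  have hSne : SZ.Nonempty := by
    refine ⟨#{U : Set Z | IsOpen U}, {U : Set Z | IsOpen U}, fun U hU => hU, ?_, rfl⟩
    intro A hA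
    obtain ⟨U, hU, hs⟩ := exists_splits hA
    exact ⟨U, hU, hs⟩
  have hmem : sInf SZ ∈ SZ := csInf_mem hSne
  obtain ⟨𝒰, hopen, hsplit, hcard⟩ := hmem
  set 𝒱 : Set (Set Y) := (fun U => e ⁻¹' U) '' 𝒰 with h𝒱
  have h1 : splittingNumber Y ≤ #𝒱 := by
    refine csInf_le' ⟨𝒱, ?_, ?_, rfl⟩
    · rintro _ ⟨U, hU, rfl⟩
      exact (hopen U hU).preimage he.continuous
    · intro A hA
      have hAim : (e '' A).Infinite := hA.image he.injective.injOn
      obtain ⟨U, hU, hsU⟩ := hsplit (e '' A) hAim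
      refine ⟨e ⁻¹' U, Set.mem_image_of_mem _ hU, ?_, ?_⟩
      · have h2 := hsU.1
        rw [← Set.image_inter_preimage] at h2
        exact h2.of_image
      · have h2 := hsU.2
        rw [← Set.image_diff_preimage] at h2
        exact h2.of_image
  calc Cardinal.lift.{w} (splittingNumber Y) ≤ Cardinal.lift.{w} #𝒱 := Cardinal.lift_le.mpr h1
    _ ≤ Cardinal.lift.{v} #𝒰 := Cardinal.mk_image_le_lift
    _ = Cardinal.lift.{v} (splittingNumber Z) := by rw [splittingNumber, ← hSZ, hcard]

lemma exists_isEmbedding_cantor {Z : Type v} [TopologicalSpace Z] [SecondCountableTopology Z]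
    [T1Space Z] (hzd : ZeroDimensional Z) :
    ∃ f : Z → (ℕ → Bool), IsEmbedding f := by
  classical
  obtain ⟨B, hBclopen, hBbasis⟩ := hzd
  set cb := countableBasis Z with hcb
  have hcbb : IsTopologicalBasis cb := isBasis_countableBasis Z
  have hcbc : cb.Countable := countable_countableBasis Z
  set pick : Set Z × Set Z → Set Z :=
    fun p => if h : ∃ c ∈ B, p.1 ⊆ c ∧ c ⊆ p.2 then h.choose else ∅ with hpick
  set C : Set (Set Z) := pick '' (cb ×ˢ cb) with hC
  have hCc : C.Countable := (hcbc.prod hcbc).image _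
  have hCclopen : ∀ u ∈ C, IsClopen u := by
    rintro _ ⟨p, _, rfl⟩
    by_cases h : ∃ c ∈ B, p.1 ⊆ c ∧ c ⊆ p.2
    · simp only [hpick, dif_pos h]
      exact hBclopen _ h.choose_spec.1
    · simp only [hpick, dif_neg h]
      exact isClopen_empty
  have hCnhds : ∀ x u, x ∈ u → IsOpen u → ∃ v ∈ C, x ∈ v ∧ v ⊆ u := by
    intro x u hxu hu
    obtain ⟨W, hWcb, hxW, hWu⟩ := hcbb.exists_subset_of_mem_open hxu hu
    obtain ⟨c, hcB, hxc, hcW⟩ := hBbasis.exists_subset_of_mem_open hxW (hcbb.isOpen hWcb)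
    obtain ⟨V, hVcb, hxV, hVc⟩ := hcbb.exists_subset_of_mem_open hxc ((hBclopen c hcB).2)
    have hex : ∃ c' ∈ B, V ⊆ c' ∧ c' ⊆ W := ⟨c, hcB, hVc, hcW⟩
    refine ⟨pick (V, W), ⟨(V, W), Set.mk_mem_prod hVcb hWcb, rfl⟩, ?_, ?_⟩
    · simp only [hpick, dif_pos hex]
      exact hex.choose_spec.2.1 hxV
    · simp only [hpick, dif_pos hex]
      exact fun y hy => hWu (hex.choose_spec.2.2 hy)
  have hCbasis : IsTopologicalBasis C :=
    isTopologicalBasis_of_isOpen_of_nhds (fun u hu => (hCclopen u hu).2) hCnhds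
  -- enumerate
  have hins : (insert (∅ : Set Z) C).Countable := hCc.insert ∅
  obtain ⟨g, hg⟩ := hins.exists_surjective ⟨∅, Set.mem_insert _ _⟩
  set W : ℕ → Set Z := fun n => (g n : Set Z) with hW
  have hWclopen : ∀ n, IsClopen (W n) := by
    intro n
    rcases (g n).2 with h | h
    · rw [hW]; simp only [h]; exact isClopen_empty
    · exact hCclopen _ h
  have hWC : ∀ u ∈ C, ∃ n, W n = u := by
    intro u hu
    obtain ⟨n, hn⟩ := hg ⟨u, Set.mem_insert_of_mem _ hu⟩
    exact ⟨n, by show ((g n : Set Z)) = u; rw [hn]⟩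
  set f : Z → ℕ → Bool := fun z n => (W n).boolIndicator z with hf
  have hfc : Continuous f :=
    continuous_pi fun n => (continuous_boolIndicator_iff_isClopen _).mpr (hWclopen n)
  have hfi : Function.Injective f := by
    intro x y hxy
    by_contra hne
    obtain ⟨u, hu, hxu, hyu⟩ := t1Space_iff_exists_open.mp ‹T1Space Z› hne
    obtain ⟨v, hvC, hxv, hvu⟩ := hCnhds x u hxu hu
    obtain ⟨n, hn⟩ := hWC v hvC
    have h1 : f x n = true := by
      rw [hf]; exact ((W n).mem_iff_boolIndicator x).mp (hn ▸ hxv)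
    have h2 : f y n = false := by
      rw [hf]
      exact ((W n).notMem_iff_boolIndicator y).mp (hn ▸ fun h => hyu (hvu h))
    rw [hxy] at h1
    rw [h1] at h2
    exact Bool.noConfusion h2
  refine ⟨f, ⟨?_⟩, hfi⟩
  refine le_antisymm (continuous_iff_le_induced.mp hfc) ?_
  rw [hCbasis.eq_generateFrom]
  refine le_generateFrom ?_
  intro u huC
  obtain ⟨n, hn⟩ := hWC u huC
  have heq : u = f ⁻¹' ((fun q : ℕ → Bool => q n) ⁻¹' {true}) := by
    ext z
    simp only [Set.mem_preimage, Set.mem_singleton_iff, hf]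
    rw [← hn]
    exact (W n).mem_iff_boolIndicator z
  rw [heq]
  exact isOpen_induced ((isOpen_discrete ({true} : Set Bool)).preimage (continuous_apply n))

end Transfer
lemma exists_cantor_inj {P : Type u} [tP : TopologicalSpace P] [PolishSpace P]
    [MeasurableSpace P] [BorelSpace P] {X : Set P}
    (hunc : ¬ X.Countable) (hBorel : MeasurableSet X) :
    ∃ f : (ℕ → Bool) → P, Set.range f ⊆ X ∧ Continuous f ∧ Function.Injective f := by
  obtain ⟨t', ht'le, ht'polish, ht'closed, -⟩ := hBorel.isClopenable
  obtain ⟨f2, hrange, hcont, hinj⟩ :=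
    @IsClosed.exists_nat_bool_injection_of_not_countable P t' ht'polish X ht'closed hunc
  refine ⟨f2, hrange, ?_, hinj⟩
  have h := continuous_iff_le_induced.mp hcont
  exact continuous_iff_le_induced.mpr (h.trans (induced_mono ht'le))

/-- If `X` is an uncountable, zero-dimensional, Borel subspace of a Polish space,
then `s(X) = s(2^ω)`. -/
theorem stmt1 {P : Type u} [TopologicalSpace P] [PolishSpace P]
    [MeasurableSpace P] [BorelSpace P] (X : Set P)
    (hunc : ¬ X.Countable) (hBorel : MeasurableSet X) (hzd : ZeroDimensional X) :
    splittingNumber X = Cardinal.lift.{u} (splittingNumber (ℕ → Bool)) := by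
  -- direction ≤ : embed X into the Cantor space
  obtain ⟨f, hf⟩ := exists_isEmbedding_cantor (Z := X) hzd
  have h1 : Cardinal.lift.{0} (splittingNumber X) ≤
      Cardinal.lift.{u} (splittingNumber (ℕ → Bool)) :=
    splittingNumber_le_of_isEmbedding hf
  rw [Cardinal.lift_uzero] at h1
  -- direction ≥ : embed the Cantor space into X
  obtain ⟨f2, hrange, hcont2, hinj⟩ := exists_cantor_inj hunc hBorel
  set g2 : (ℕ → Bool) → X := fun a => ⟨f2 a, hrange ⟨a, rfl⟩⟩ with hg2
  have hg2c : Continuous g2 := hcont2.subtype_mk _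
  have hg2i : Function.Injective g2 := fun a b h => hinj (congrArg Subtype.val h)
  have hemb : IsEmbedding g2 := (hg2c.isClosedEmbedding hg2i).toIsEmbedding
  have h2 : Cardinal.lift.{u} (splittingNumber (ℕ → Bool)) ≤
      Cardinal.lift.{0} (splittingNumber X) :=
    splittingNumber_le_of_isEmbedding hemb
  rw [Cardinal.lift_uzero] at h2
  exact le_antisymm h1 h2
end

section
/- The splitting number s(2^ω) of the Cantor space is uncountable, i.e. s(2^ω) ≥ ℵ₁. -/
open Cardinal Filter

section Aux

variable {X : Type*}

/-- Finite sets of already-chosen diagonal points. -/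
noncomputable def auxChain (A : ℕ → Set X) (hA : ∀ n, (A n).Infinite) :
    ℕ → {s : Set X // s.Finite}
  | 0 => ⟨∅, Set.finite_empty⟩
  | n + 1 =>
    let p := auxChain A hA n
    ⟨insert (((hA n).diff p.2).nonempty.some) p.1, p.2.insert _⟩

/-- The diagonal sequence. -/
noncomputable def auxSeq (A : ℕ → Set X) (hA : ∀ n, (A n).Infinite) (n : ℕ) : X :=
  ((hA n).diff (auxChain A hA n).2).nonempty.some

lemma auxSeq_spec (A : ℕ → Set X) (hA : ∀ n, (A n).Infinite) (n : ℕ) :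
    auxSeq A hA n ∈ A n \ (auxChain A hA n).1 :=
  ((hA n).diff (auxChain A hA n).2).nonempty.some_mem

lemma auxChain_succ (A : ℕ → Set X) (hA : ∀ n, (A n).Infinite) (n : ℕ) :
    (auxChain A hA (n + 1)).1 = insert (auxSeq A hA n) (auxChain A hA n).1 := rfl

lemma auxSeq_mem_chain (A : ℕ → Set X) (hA : ∀ n, (A n).Infinite) :
    ∀ {k n : ℕ}, k < n → auxSeq A hA k ∈ (auxChain A hA n).1 := by
  intro k n
  induction n with
  | zero => omega
  | succ m ih =>
    intro hk
    rw [auxChain_succ]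
    rcases Nat.lt_succ_iff_lt_or_eq.mp hk with h | h
    · exact Set.mem_insert_of_mem _ (ih h)
    · subst h; exact Set.mem_insert _ _

lemma auxSeq_injective (A : ℕ → Set X) (hA : ∀ n, (A n).Infinite) :
    Function.Injective (auxSeq A hA) := by
  intro m n hmn
  by_contra hne
  rcases Nat.lt_or_ge m n with h | h
  · exact (auxSeq_spec A hA n).2 (hmn ▸ auxSeq_mem_chain A hA h)
  · have h' : n < m := lt_of_le_of_ne h (Ne.symm hne)
    exact (auxSeq_spec A hA m).2 (hmn ▸ auxSeq_mem_chain A hA h')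

lemma auxSeq_mem (A : ℕ → Set X) (hA : ∀ n, (A n).Infinite) (n : ℕ) :
    auxSeq A hA n ∈ A n := (auxSeq_spec A hA n).1

/-- A countable family of sets cannot split every infinite set. -/
lemma exists_unsplit [Infinite X] (𝒰 : Set (Set X)) (h𝒰 : 𝒰.Countable) :
    ∃ A : Set X, A.Infinite ∧ ∀ U ∈ 𝒰, ¬ Splits U A := by
  rcases 𝒰.eq_empty_or_nonempty with rfl | hne
  · exact ⟨Set.univ, Set.infinite_univ, by simp⟩
  obtain ⟨f, rfl⟩ := h𝒰.exists_eq_range hne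
  classical
  -- the decreasing chain of infinite sets
  let A : ℕ → Set X := fun n => Nat.rec Set.univ
    (fun m Am => if (Am ∩ f m).Infinite then Am ∩ f m else Am \ f m) n
  have hAsucc : ∀ n, A (n + 1) =
      if (A n ∩ f n).Infinite then A n ∩ f n else A n \ f n := fun n => rfl
  have hA : ∀ n, (A n).Infinite := by
    intro n
    induction n with
    | zero => exact Set.infinite_univ
    | succ m ih =>
      rw [hAsucc]
      split_ifs with h
      · exact h
      · have heq : A m \ f m = A m \ (A m ∩ f m) := by
          ext x; simp only [Set.mem_diff, Set.mem_inter_iff]; tauto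
        rw [heq]
        exact ih.diff (Set.not_infinite.mp h)
  have hAstep : ∀ n, A (n + 1) ⊆ f n ∨ A (n + 1) ∩ f n = ∅ := by
    intro n
    rw [hAsucc]
    split_ifs with h
    · exact Or.inl Set.inter_subset_right
    · right
      ext x
      simp only [Set.mem_inter_iff, Set.mem_diff, Set.mem_empty_iff_false, iff_false]
      rintro ⟨⟨-, hx⟩, hx'⟩
      exact hx hx'
  have hmono : ∀ n, A (n + 1) ⊆ A n := by
    intro n
    rw [hAsucc]
    split_ifs
    · exact Set.inter_subset_left
    · exact Set.diff_subset
  have hmono' : ∀ {n m : ℕ}, n ≤ m → A m ⊆ A n := by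
    intro n m h
    induction h with
    | refl => exact fun x hx => hx
    | step _ ih => exact fun _ hx => ih (hmono _ hx)
  set a := auxSeq A hA with ha
  refine ⟨Set.range a, Set.infinite_range_of_injective (auxSeq_injective A hA), ?_⟩
  rintro U ⟨n, rfl⟩ hsplit
  have hmem : ∀ k, n + 1 ≤ k → a k ∈ A (n + 1) := fun k hk =>
    hmono' hk (auxSeq_mem A hA k)
  have hfin : (a '' {k | k ≤ n}).Finite := (Set.finite_Iic n).image a
  rcases hAstep n with h | h
  · -- A (n+1) ⊆ f n, so range a \ f n is finite
    refine hsplit.2 (hfin.subset ?_)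
    rintro x ⟨⟨k, rfl⟩, hx⟩
    rcases le_or_gt k n with hk | hk
    · exact ⟨k, hk, rfl⟩
    · exact absurd (h (hmem k hk)) hx
  · -- A (n+1) ∩ f n = ∅, so range a ∩ f n is finite
    refine hsplit.1 (hfin.subset ?_)
    rintro x ⟨⟨k, rfl⟩, hx⟩
    rcases le_or_gt k n with hk | hk
    · exact ⟨k, hk, rfl⟩
    · exact absurd (Set.eq_empty_iff_forall_notMem.mp h (a k) ⟨hmem k hk, hx⟩) id

end Aux

/-- In the Cantor space, every infinite set is split by some open set. -/
lemma cantor_exists_splits (A : Set (ℕ → Bool)) (hA : A.Infinite) :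
    ∃ U : Set (ℕ → Bool), IsOpen U ∧ Splits U A := by
  classical
  by_cases hcase : ∃ n, {a ∈ A | a n = true}.Infinite ∧ {a ∈ A | a n = false}.Infinite
  · obtain ⟨n, h1, h0⟩ := hcase
    refine ⟨(fun f : ℕ → Bool => f n) ⁻¹' {true}, (continuous_apply n).isOpen_preimage _
      (isOpen_discrete _), ?_, ?_⟩
    · refine h1.mono ?_
      rintro x ⟨hx, hx'⟩
      exact ⟨hx, hx'⟩
    · refine h0.mono ?_
      rintro x ⟨hx, hx'⟩
      refine ⟨hx, ?_⟩
      simp only [Set.mem_preimage, Set.mem_singleton_iff, hx']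
      simp
  · push_neg at hcase
    set b : ℕ → Bool := fun n => if ({a ∈ A | a n = true}).Infinite then true else false with hb
    have hfib : ∀ n, {a ∈ A | a n ≠ b n}.Finite := by
      intro n
      by_cases h : ({a ∈ A | a n = true}).Infinite
      · have h0 : {a ∈ A | a n = false}.Finite := hcase n h
        refine h0.subset ?_
        rintro x ⟨hx, hx'⟩
        rw [hb] at hx'
        simp only [if_pos h] at hx'
        exact ⟨hx, by simpa using hx'⟩
      · refine (Set.not_infinite.mp h).subset ?_
        rintro x ⟨hx, hx'⟩
        rw [hb] at hx'
        simp only [if_neg h] at hx'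
        exact ⟨hx, by simpa using hx'⟩
    have hAb : (A \ {b}).Infinite := hA.diff (Set.finite_singleton b)
    -- least coordinate of difference
    have hdiffex : ∀ a : ℕ → Bool, a ≠ b → ∃ n, a n ≠ b n := fun a h => Function.ne_iff.mp h
    set d : (ℕ → Bool) → ℕ := fun a => if h : a ≠ b then Nat.find (hdiffex a h) else 0 with hd
    have hd_spec : ∀ a, a ≠ b → a (d a) ≠ b (d a) := by
      intro a h
      rw [hd]; simp only [dif_pos h]
      exact Nat.find_spec (hdiffex a h)
    have hd_min : ∀ a (h : a ≠ b) k, k < d a → a k = b k := by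
      intro a h k hk
      rw [hd] at hk; simp only [dif_pos h] at hk
      have := Nat.find_min (hdiffex a h) hk
      simpa using this
    have hd_eq : ∀ a, a ≠ b → ∀ n, (∀ k < n, a k = b k) → a n ≠ b n → d a = n := by
      intro a h n hlt hne
      rcases lt_trichotomy (d a) n with hc | hc | hc
      · exact absurd (hlt _ hc) (hd_spec a h)
      · exact hc
      · exact absurd (hd_min a h n hc) hne
    -- the image N is infinite
    have hN : (d '' (A \ {b})).Infinite := by
      intro hNfin
      apply hAb
      have : A \ {b} ⊆ ⋃ n ∈ d '' (A \ {b}), {a ∈ A | a n ≠ b n} := by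
        intro x hx
        refine Set.mem_biUnion ⟨x, hx, rfl⟩ ⟨hx.1, hd_spec x hx.2⟩
      exact (hNfin.biUnion (fun n _ => hfib n)).subset this
    set e := hN.natEmbedding with he
    have hecoe : Function.Injective (fun k : ℕ => (e k : ℕ)) :=
      Subtype.coe_injective.comp e.injective
    set N' : Set ℕ := Set.range (fun k : ℕ => (e (2 * k) : ℕ)) with hN'
    -- the open set
    set C : ℕ → Set (ℕ → Bool) :=
      fun n => {f | (∀ k < n, f k = b k) ∧ f n ≠ b n} with hC
    have hCopen : ∀ n, IsOpen (C n) := by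
      intro n
      have : C n = (⋂ k ∈ Set.Iio n, (fun f : ℕ → Bool => f k) ⁻¹' {b k}) ∩
          (fun f : ℕ → Bool => f n) ⁻¹' {b n}ᶜ := by
        ext f
        constructor
        · rintro ⟨h1, h2⟩
          exact ⟨Set.mem_iInter₂.mpr fun k hk => h1 k hk, h2⟩
        · rintro ⟨h1, h2⟩
          exact ⟨fun k hk => Set.mem_iInter₂.mp h1 k hk, h2⟩
      rw [this]
      exact (((Set.finite_Iio n).isOpen_biInter fun k _ =>
          (continuous_apply k).isOpen_preimage _ (isOpen_discrete _))).inter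
        ((continuous_apply n).isOpen_preimage _ (isOpen_discrete _))
    have hmemC : ∀ a, a ≠ b → ∀ n, a ∈ C n ↔ d a = n := by
      intro a h n
      constructor
      · rintro ⟨h1, h2⟩
        exact hd_eq a h n h1 h2
      · rintro rfl
        exact ⟨hd_min a h, hd_spec a h⟩
    refine ⟨⋃ n ∈ N', C n, isOpen_biUnion fun n _ => hCopen n, ?_, ?_⟩
    · -- A ∩ U infinite
      have hsub : {a ∈ A \ {b} | d a ∈ N'} ⊆ A ∩ ⋃ n ∈ N', C n := by
        rintro x ⟨hx, hx'⟩
        exact ⟨hx.1, Set.mem_biUnion hx' ((hmemC x hx.2 (d x)).mpr rfl)⟩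
      refine Set.Infinite.mono hsub ?_
      apply Set.Infinite.of_image d
      have heven : Function.Injective (fun k : ℕ => (e (2 * k) : ℕ)) := by
        intro k j h
        have := hecoe h
        omega
      refine Set.Infinite.mono (t := d '' {a ∈ A \ {b} | d a ∈ N'}) ?_
        (Set.infinite_range_of_injective heven)
      rintro m ⟨k, rfl⟩
      have : (e (2 * k) : ℕ) ∈ d '' (A \ {b}) := (e (2 * k)).2
      obtain ⟨x, hx, hxd⟩ := this
      exact ⟨x, ⟨hx, ⟨k, hxd.symm⟩⟩, hxd⟩
    · -- A \ U infinite
      have hdisj : ∀ k j : ℕ, (e (2 * k + 1) : ℕ) ≠ (e (2 * j) : ℕ) := by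
        intro k j h
        have := hecoe h
        omega
      have hsub : {a ∈ A \ {b} | ∃ k, d a = (e (2 * k + 1) : ℕ)} ⊆
          A \ ⋃ n ∈ N', C n := by
        rintro x ⟨hx, k, hk⟩
        refine ⟨hx.1, ?_⟩
        intro hmem
        obtain ⟨n, hn, hxn⟩ := by
          simpa using hmem
        obtain ⟨j, hj⟩ := hn
        have := (hmemC x hx.2 n).mp hxn
        exact hdisj k j (by rw [← hk, this, ← hj])
      refine Set.Infinite.mono hsub ?_
      apply Set.Infinite.of_image d
      have hinj2 : Function.Injective (fun k : ℕ => (e (2 * k + 1) : ℕ)) := by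
        intro k j h
        have := hecoe h
        omega
      refine Set.Infinite.mono (t := d '' {a ∈ A \ {b} | ∃ k, d a = (e (2 * k + 1) : ℕ)}) ?_
        (Set.infinite_range_of_injective hinj2)
      rintro m ⟨k, rfl⟩
      have : (e (2 * k + 1) : ℕ) ∈ d '' (A \ {b}) := (e (2 * k + 1)).2
      obtain ⟨x, hx, hxd⟩ := this
      exact ⟨x, ⟨hx, ⟨k, hxd⟩⟩, hxd⟩

/-- The splitting number of the Cantor space is uncountable. -/
theorem stmt2 : Cardinal.aleph 1 ≤ splittingNumber (ℕ → Bool) := by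
  apply le_csInf
  · refine ⟨#{U : Set (ℕ → Bool) | IsOpen U}, {U | IsOpen U}, fun U hU => hU, ?_, rfl⟩
    intro A hA
    obtain ⟨U, hUo, hs⟩ := cantor_exists_splits A hA
    exact ⟨U, hUo, hs⟩
  · rintro c ⟨𝒰, -, hsplit, rfl⟩
    by_contra h
    have hc : 𝒰.Countable := (Cardinal.countable_iff_lt_aleph_one 𝒰).2 (not_le.mp h)
    obtain ⟨A, hAinf, hno⟩ := exists_unsplit 𝒰 hc
    obtain ⟨U, hU, hs⟩ := hsplit A hAinf
    exact hno U hU hs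
end

section
/- Suppose κ is a cardinal such that 𝔰(ℝ) ≤ κ and κ = cof([κ]^{ℵ₀}, ⊆). Then 𝔷 ≤ κ; that is, there is an infinite compact Hausdorff space of weight at most κ containing no non-trivial convergent sequence. -/
open Cardinal Filter

/-- `cof([α]^{ℵ₀}, ⊆)`: the smallest cardinality of a family of countable subsets of `α`
that is cofinal in the countable subsets of `α` under inclusion. -/
noncomputable def cofCountableSubsets (α : Type*) : Cardinal :=
  sInf {c : Cardinal | ∃ 𝒞 : Set (Set α), (∀ A ∈ 𝒞, A.Countable) ∧
    (∀ B : Set α, B.Countable → ∃ A ∈ 𝒞, B ⊆ A) ∧ c = #𝒞}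

namespace Stmt7Aux

open Set Topology

noncomputable section
open scoped Classical

/-- Classical boolean truth value of a proposition. -/
def bofProp (p : Prop) : Bool := @decide p (Classical.propDecidable p)

@[simp] lemma bofProp_eq_true {p : Prop} : bofProp p = true ↔ p := by
  simp [bofProp]

@[simp] lemma bofProp_eq_false {p : Prop} : bofProp p = false ↔ ¬ p := by
  simp [bofProp]

lemma exists_strictMono_or_anti {A : Set ℝ} (hA : A.Infinite) :
    ∃ b : ℕ → ℝ, (∀ n, b n ∈ A) ∧ (StrictMono b ∨ StrictAnti b) := by
  classical
  let f := hA.natEmbedding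
  let F : ℕ → ℝ := fun n => (f n : ℝ)
  have hFinj : Function.Injective F := fun a b h => f.injective (Subtype.val_injective h)
  have hFA : ∀ n, F n ∈ A := fun n => (f n).2
  haveI : IsTrans ℝ (· ≤ ·) := ⟨fun _ _ _ => le_trans⟩
  obtain ⟨g, hg | hg⟩ := exists_increasing_or_nonincreasing_subseq (· ≤ ·) F
  · refine ⟨F ∘ g, fun n => hFA _, Or.inl fun m n h => ?_⟩
    have h1 : F (g m) ≤ F (g n) := hg m n h
    have h2 : F (g m) ≠ F (g n) := fun e => by
      have := g.injective (hFinj e); omega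
    exact lt_of_le_of_ne h1 h2
  · refine ⟨F ∘ g, fun n => hFA _, Or.inr fun m n h => ?_⟩
    exact not_le.mp (hg m n h)

lemma exists_open_splits {A : Set ℝ} (hA : A.Infinite) :
    ∃ U : Set ℝ, IsOpen U ∧ Splits U A := by
  obtain ⟨b, hbA, hb | hb⟩ := exists_strictMono_or_anti hA
  · refine ⟨⋃ j : ℕ, Ioo (b (2*j)) (b (2*j+2)), isOpen_iUnion fun j => isOpen_Ioo, ?_, ?_⟩
    · exact Set.infinite_of_injective_forall_mem
        (f := fun n : ℕ => b (2*n+1))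
        (fun m n h => by have := hb.injective h; omega)
        (fun n => ⟨hbA _, mem_iUnion.mpr ⟨n, hb (by omega), hb (by omega)⟩⟩)
    · refine Set.infinite_of_injective_forall_mem (f := fun n : ℕ => b (2*n))
        (fun m n h => by have := hb.injective h; omega) (fun n => ⟨hbA _, ?_⟩)
      intro hmem
      obtain ⟨j, hj1, hj2⟩ := mem_iUnion.mp hmem
      rw [hb.lt_iff_lt] at hj1 hj2
      omega
  · refine ⟨⋃ j : ℕ, Ioo (b (2*j+2)) (b (2*j)), isOpen_iUnion fun j => isOpen_Ioo, ?_, ?_⟩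
    · exact Set.infinite_of_injective_forall_mem
        (f := fun n : ℕ => b (2*n+1))
        (fun m n h => by have := hb.injective h; omega)
        (fun n => ⟨hbA _, mem_iUnion.mpr ⟨n, hb (by omega), hb (by omega)⟩⟩)
    · refine Set.infinite_of_injective_forall_mem (f := fun n : ℕ => b (2*n))
        (fun m n h => by have := hb.injective h; omega) (fun n => ⟨hbA _, ?_⟩)
      intro hmem
      obtain ⟨j, hj1, hj2⟩ := mem_iUnion.mp hmem
      rw [hb.lt_iff_gt] at hj1 hj2
      omega

lemma exists_splitting_family {κ : Cardinal.{0}} (h₁ : splittingNumber ℝ ≤ κ) :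
    ∃ 𝒰 : Set (Set ℝ), (∀ U ∈ 𝒰, IsOpen U) ∧
      (∀ A : Set ℝ, A.Infinite → ∃ U ∈ 𝒰, Splits U A) ∧ #𝒰 ≤ κ := by
  have hne : {c : Cardinal | ∃ 𝒰 : Set (Set ℝ), (∀ U ∈ 𝒰, IsOpen U) ∧
      (∀ A : Set ℝ, A.Infinite → ∃ U ∈ 𝒰, Splits U A) ∧ c = #𝒰}.Nonempty := by
    refine ⟨#{U : Set ℝ | IsOpen U}, {U | IsOpen U}, fun U hU => hU, fun A hA => ?_, rfl⟩
    obtain ⟨U, hUo, hUs⟩ := exists_open_splits hA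
    exact ⟨U, hUo, hUs⟩
  obtain ⟨𝒰, ho, hs, hc⟩ := csInf_mem hne
  exact ⟨𝒰, ho, hs, hc ▸ h₁⟩

lemma cofCountableSubsets_eq_one (α : Type) [Countable α] : cofCountableSubsets α = 1 := by
  apply le_antisymm
  · apply csInf_le'
    refine ⟨{Set.univ}, ?_, ?_, ?_⟩
    · rintro A rfl
      exact Set.to_countable _
    · exact fun B _ => ⟨Set.univ, rfl, subset_univ B⟩
    · simp
  · apply le_csInf
    · refine ⟨1, {Set.univ}, ?_, ?_, by simp⟩
      · rintro A rfl; exact Set.to_countable _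
      · exact fun B _ => ⟨Set.univ, rfl, subset_univ B⟩
    · rintro c ⟨𝒞, -, hcof, rfl⟩
      obtain ⟨A, hA, -⟩ := hcof ∅ countable_empty
      rw [Cardinal.one_le_iff_ne_zero, Cardinal.mk_ne_zero_iff]
      exact ⟨A, hA⟩

lemma aleph0_lt_kappa {κ : Cardinal.{0}} (h₁ : splittingNumber ℝ ≤ κ)
    (h₂ : cofCountableSubsets (Quotient.out κ) = κ) : ℵ₀ < κ := by
  by_contra hlt
  push_neg at hlt
  have hcount : Countable (Quotient.out κ) := by
    rw [← Cardinal.mk_le_aleph0_iff, Cardinal.mk_out]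
    exact hlt
  have hκ1 : κ = 1 := by
    rw [← h₂]
    exact cofCountableSubsets_eq_one _
  subst hκ1
  obtain ⟨𝒰, ho, hs, hc⟩ := exists_splitting_family h₁
  -- 𝒰 is a subsingleton
  have hsub : 𝒰.Subsingleton := by
    rwa [← Cardinal.mk_le_one_iff_set_subsingleton]
  -- get the (unique) member that splits the copy of ℕ
  have hNinf : (Set.range ((↑) : ℕ → ℝ)).Infinite :=
    Set.infinite_range_of_injective Nat.cast_injective
  obtain ⟨U, hU𝒰, hUsp⟩ := hs _ hNinf
  have hUne : U.Nonempty := by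
    rcases hUsp.1.nonempty with ⟨x, -, hx⟩
    exact ⟨x, hx⟩
  obtain ⟨x, hxU⟩ := hUne
  obtain ⟨ε, hε, hball⟩ := Metric.isOpen_iff.mp (ho U hU𝒰) x hxU
  set A : Set ℝ := Set.range (fun n : ℕ => x + ε/(n+2)) with hAdef
  have hAU : A ⊆ U := by
    rintro _ ⟨n, rfl⟩
    apply hball
    rw [Metric.mem_ball, Real.dist_eq]
    have h2 : (0:ℝ) < n + 2 := by positivity
    rw [add_sub_cancel_left, abs_of_pos (by positivity)]
    rw [div_lt_iff₀ h2]
    nlinarith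
  have hAinf : A.Infinite := by
    apply Set.infinite_range_of_injective
    intro m n h
    have hm : (0:ℝ) < m + 2 := by positivity
    have hn : (0:ℝ) < n + 2 := by positivity
    have hd : ε/(m+2) = ε/((n:ℝ)+2) := by
      have := h; simp only [add_right_inj] at this; exact this
    have h4 : ε * ((n:ℝ)+2) = ε * ((m:ℝ)+2) := (div_eq_div_iff (ne_of_gt hm) (ne_of_gt hn)).mp hd
    have h5 : (n:ℝ) + 2 = (m:ℝ) + 2 := mul_left_cancel₀ (ne_of_gt hε) h4
    have : (m:ℝ) = n := by linarith
    exact_mod_cast this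
  obtain ⟨U', hU'𝒰, hU'sp⟩ := hs A hAinf
  have hEq : U' = U := hsub hU'𝒰 hU𝒰
  have h5 : (A \ U').Infinite := hU'sp.2
  rw [hEq, Set.diff_eq_empty.mpr hAU] at h5
  exact Set.not_infinite.mpr Set.finite_empty h5

lemma exists_cof_family_of_eq {κ : Cardinal.{0}} {I : Type}
    (hI : #I = κ) (h₂ : cofCountableSubsets (Quotient.out κ) = κ) :
    ∃ 𝒞 : Set (Set I), (∀ A ∈ 𝒞, A.Countable) ∧
      (∀ B : Set I, B.Countable → ∃ A ∈ 𝒞, B ⊆ A) ∧ #𝒞 ≤ κ := by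
  have hne : {c : Cardinal | ∃ 𝒞 : Set (Set (Quotient.out κ)), (∀ A ∈ 𝒞, A.Countable) ∧
      (∀ B : Set (Quotient.out κ), B.Countable → ∃ A ∈ 𝒞, B ⊆ A) ∧ c = #𝒞}.Nonempty := by
    exact ⟨_, {A | A.Countable}, fun A hA => hA, fun B hB => ⟨B, hB, subset_rfl⟩, rfl⟩
  obtain ⟨𝒞₀, hcnt, hcof, hcard⟩ := csInf_mem hne
  have hcard' : #𝒞₀ ≤ κ := by
    rw [← hcard]
    exact le_of_eq h₂
  -- transfer along an equivalence
  have : #(Quotient.out κ) = #I := by rw [Cardinal.mk_out, hI]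
  obtain ⟨e⟩ := Cardinal.eq.mp this
  refine ⟨(fun A => e '' A) '' 𝒞₀, ?_, ?_, ?_⟩
  · rintro _ ⟨A, hA, rfl⟩
    exact (hcnt A hA).image e
  · intro B hB
    obtain ⟨A, hA, hBA⟩ := hcof (e.symm '' B) (hB.image _)
    refine ⟨e '' A, ⟨A, hA, rfl⟩, ?_⟩
    intro b hb
    have : e.symm b ∈ A := hBA ⟨b, hb, rfl⟩
    exact ⟨e.symm b, this, by simp⟩
  · exact le_trans (Cardinal.mk_image_le) hcard'

lemma card_Iic_lt {κ : Cardinal.{0}} (hκ : ℵ₀ < κ) (j : κ.ord.ToType) :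
    #(Set.Iic j) < κ := by
  have h1 : #(Set.Iio j) < κ := Cardinal.mk_Iio_ord_toType j
  have h2 : Set.Iic j ⊆ Set.Iio j ∪ {j} := by
    intro i hi
    rcases lt_or_eq_of_le (mem_Iic.mp hi) with h | h
    · exact Or.inl h
    · exact Or.inr (by simp [h])
  calc #(Set.Iic j) ≤ #(Set.Iio j ∪ {j} : Set _) := Cardinal.mk_le_mk_of_subset h2
    _ ≤ #(Set.Iio j) + #({j} : Set _) := Cardinal.mk_union_le _ _
    _ ≤ #(Set.Iio j) + 1 := by rw [Cardinal.mk_singleton]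
    _ < κ := Cardinal.add_lt_of_lt (le_of_lt hκ) h1 (lt_trans Cardinal.one_lt_aleph0 hκ)

lemma countable_bounded {κ : Cardinal.{0}} (hκ : ℵ₀ < κ)
    (h₂ : cofCountableSubsets (Quotient.out κ) = κ)
    {S : Set κ.ord.ToType} (hS : S.Countable) : ∃ j, ∀ i ∈ S, i < j := by
  classical
  have hκ0 : κ ≠ 0 := by
    intro h
    rw [h] at hκ
    exact absurd hκ (by simp)
  have hIne : Nonempty κ.ord.ToType := Ordinal.toType_nonempty_iff_ne_zero.mpr (by
    intro h
    apply hκ0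
    have := congrArg Ordinal.card h
    rwa [Cardinal.card_ord, Ordinal.card_zero] at this)
  have hImk : #κ.ord.ToType = κ := by rw [Cardinal.mk_toType, Cardinal.card_ord]
  obtain ⟨𝒞, hcnt, hcof, hcard⟩ := exists_cof_family_of_eq hImk h₂
  rcases S.eq_empty_or_nonempty with rfl | hSne
  · exact ⟨Classical.arbitrary _, fun i hi => absurd hi (Set.notMem_empty i)⟩
  by_contra hcon
  push_neg at hcon
  -- hcon : ∀ j, ∃ i ∈ S, j ≤ i
  obtain ⟨s, hSr⟩ := hS.exists_eq_range hSne
  have h𝒞ne : 𝒞.Nonempty := by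
    obtain ⟨A, hA, -⟩ := hcof ∅ countable_empty
    exact ⟨A, hA⟩
  haveI : Nonempty ↥𝒞 := h𝒞ne.to_subtype
  -- a surjection from I onto 𝒞
  obtain ⟨emb⟩ : Nonempty (↥𝒞 ↪ κ.ord.ToType) := by
    rw [← Cardinal.le_def, hImk]
    exact hcard
  set F : κ.ord.ToType → ↥𝒞 := Function.invFun emb
  have hFsurj : Function.Surjective F := Function.invFun_surjective emb.injective
  set U : ℕ → Set κ.ord.ToType := fun n => ⋃ i ∈ Set.Iic (s n), ((F i : Set κ.ord.ToType)) with hU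
  have hUcard : ∀ n, #(U n) < κ := by
    intro n
    have h1 : #(U n) ≤ #(Set.Iic (s n)) * ⨆ i : Set.Iic (s n), #((F i : Set κ.ord.ToType)) :=
      Cardinal.mk_biUnion_le _ _
    have h2 : (⨆ i : Set.Iic (s n), #((F i : Set κ.ord.ToType))) ≤ ℵ₀ := by
      apply ciSup_le'
      intro i
      have : ((F i : Set κ.ord.ToType)).Countable := hcnt _ (F i).2
      exact this.le_aleph0
    have h3 : #(U n) ≤ #(Set.Iic (s n)) * ℵ₀ :=
      le_trans h1 (mul_le_mul_right h2 _)
    have h4 : #(Set.Iic (s n)) * ℵ₀ ≤ max (max (#(Set.Iic (s n))) ℵ₀) ℵ₀ :=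
      Cardinal.mul_le_max _ _
    have h5 : max (max (#(Set.Iic (s n))) ℵ₀) ℵ₀ < κ := by
      simp only [max_lt_iff]
      exact ⟨⟨card_Iic_lt hκ _, hκ⟩, hκ⟩
    exact lt_of_le_of_lt h3 (lt_of_le_of_lt h4 h5)
  have hbn : ∀ n, ∃ b, b ∉ U n := by
    intro n
    by_contra hno
    push_neg at hno
    have : U n = Set.univ := eq_univ_of_forall hno
    have h6 := hUcard n
    rw [this, Cardinal.mk_univ, hImk] at h6
    exact lt_irrefl _ h6
  choose b hb using hbn
  obtain ⟨A, hA𝒞, hBA⟩ := hcof (Set.range b) (countable_range b)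
  obtain ⟨i₀, hi₀⟩ := hFsurj ⟨A, hA𝒞⟩
  obtain ⟨i, hiS, hle⟩ := hcon i₀
  rw [hSr] at hiS
  obtain ⟨n, rfl⟩ := hiS
  have hAU : A ⊆ U n := by
    have : ((F i₀ : Set κ.ord.ToType)) ⊆ U n :=
      Set.subset_biUnion_of_mem (u := fun i => (F i : Set κ.ord.ToType)) (mem_Iic.mpr hle)
    rwa [hi₀] at this
  exact hb n (hAU (hBA (Set.mem_range_self n)))

/-- least-rational representative of a set of reals -/
def repC (s : Set ℝ) : ℚ :=
  if h : ∃ n : ℕ, (((Denumerable.eqv ℚ).symm n : ℚ) : ℝ) ∈ s then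
    (Denumerable.eqv ℚ).symm (Nat.find h) else 0

lemma repC_mem {s : Set ℝ} (h : ∃ q : ℚ, (q:ℝ) ∈ s) : ((repC s : ℚ) : ℝ) ∈ s := by
  obtain ⟨q, hq⟩ := h
  have h' : ∃ n : ℕ, (((Denumerable.eqv ℚ).symm n : ℚ) : ℝ) ∈ s :=
    ⟨Denumerable.eqv ℚ q, by simpa using hq⟩
  unfold repC
  rw [dif_pos h']
  exact Nat.find_spec h'

lemma exists_rat_mem_cc {U : Set ℝ} (hU : IsOpen U) {x : ℝ} (hx : x ∈ U) :
    ∃ q : ℚ, (q:ℝ) ∈ connectedComponentIn U x :=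
  Rat.denseRange_cast.exists_mem_open hU.connectedComponentIn
    ⟨x, mem_connectedComponentIn hx⟩

/-- `q` is the canonical representative of its own component. -/
def IsRep (U : Set ℝ) (q : ℚ) : Prop :=
  (q:ℝ) ∈ U ∧ repC (connectedComponentIn U (q:ℝ)) = q

lemma cc_eq_or_disjoint (U : Set ℝ) (x y : ℝ) :
    connectedComponentIn U x = connectedComponentIn U y ∨
      connectedComponentIn U x ∩ connectedComponentIn U y = ∅ := by
  by_cases h : (connectedComponentIn U x ∩ connectedComponentIn U y).Nonempty
  · obtain ⟨z, hzx, hzy⟩ := h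
    left
    rw [connectedComponentIn_eq hzx, connectedComponentIn_eq hzy]
  · right
    exact Set.not_nonempty_iff_eq_empty.mp h

lemma isRep_eq_of_cc_eq {U : Set ℝ} {q q' : ℚ} (hq : IsRep U q) (hq' : IsRep U q')
    (h : connectedComponentIn U (q:ℝ) = connectedComponentIn U (q':ℝ)) : q = q' := by
  have := hq.2
  rw [h, hq'.2] at this
  exact this.symm

/-- union of canonically-representated components indexed by `S` -/
def Wbig (U : Set ℝ) (S : Set ℚ) : Set ℝ :=
  ⋃ q ∈ {q : ℚ | q ∈ S ∧ IsRep U q}, connectedComponentIn U (q:ℝ)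

lemma Wbig_open {U : Set ℝ} (hU : IsOpen U) (S : Set ℚ) : IsOpen (Wbig U S) :=
  isOpen_biUnion fun _ _ => hU.connectedComponentIn

/-- a splitting family for subsets of ℚ -/
lemma exists_splitting_rat {κ : Cardinal.{0}}
    (𝒰₀ : Set (Set ℝ)) (hsp : ∀ A : Set ℝ, A.Infinite → ∃ U ∈ 𝒰₀, Splits U A)
    (hc : #𝒰₀ ≤ κ) :
    ∃ 𝒮 : Set (Set ℚ), #𝒮 ≤ κ ∧
      ∀ B : Set ℚ, B.Infinite → ∃ S ∈ 𝒮, (B ∩ S).Infinite ∧ (B \ S).Infinite := by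
  classical
  set φ : ℚ → ℝ := fun q => ((Denumerable.eqv ℚ q : ℕ) : ℝ) with hφ
  have hφinj : Function.Injective φ :=
    fun a b h => (Denumerable.eqv ℚ).injective (Nat.cast_injective h)
  refine ⟨(fun U => φ ⁻¹' U) '' 𝒰₀, le_trans Cardinal.mk_image_le hc, ?_⟩
  intro B hB
  have hBim : (φ '' B).Infinite := hB.image (hφinj.injOn)
  obtain ⟨U, hU𝒰, hUsp⟩ := hsp _ hBim
  refine ⟨φ ⁻¹' U, ⟨U, hU𝒰, rfl⟩, ?_, ?_⟩
  · have hsub : (φ '' B) ∩ U ⊆ φ '' (B ∩ φ ⁻¹' U) := by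
      rintro x ⟨⟨q, hq, rfl⟩, hxU⟩
      exact ⟨q, ⟨hq, hxU⟩, rfl⟩
    have : (φ '' (B ∩ φ ⁻¹' U)).Infinite := hUsp.1.mono hsub
    exact Set.Infinite.of_image _ this
  · have hsub : (φ '' B) \ U ⊆ φ '' (B \ φ ⁻¹' U) := by
      rintro x ⟨⟨q, hq, rfl⟩, hxU⟩
      exact ⟨q, ⟨hq, hxU⟩, rfl⟩
    have : (φ '' (B \ φ ⁻¹' U)).Infinite := hUsp.2.mono hsub
    exact Set.Infinite.of_image _ this

lemma exists_strong_family {κ : Cardinal.{0}} (hκ : ℵ₀ ≤ κ)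
    (𝒰₀ : Set (Set ℝ)) (ho : ∀ U ∈ 𝒰₀, IsOpen U)
    (hsp : ∀ A : Set ℝ, A.Infinite → ∃ U ∈ 𝒰₀, Splits U A) (hc : #𝒰₀ ≤ κ) :
    ∃ 𝒲 : Set (Set ℝ), (∀ W ∈ 𝒲, IsOpen W) ∧ #𝒲 ≤ κ ∧
      ∀ t : ℕ → ℝ, Function.Injective t → ∀ L, Tendsto t atTop (nhds L) →
        ∃ W ∈ 𝒲, {k | t k ∈ W}.Infinite ∧ {k | t k ∉ closure W}.Infinite := by
  classical
  obtain ⟨𝒮, h𝒮c, h𝒮⟩ := exists_splitting_rat 𝒰₀ hsp hc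
  set 𝒲₂ : Set (Set ℝ) := Set.range (fun p : ↥𝒰₀ × ↥𝒮 => Wbig p.1.val p.2.val) with h𝒲₂
  set 𝒲₃ : Set (Set ℝ) := Set.range
    (fun p : ↥𝒰₀ × ℚ × ℚ => connectedComponentIn p.1.val (p.2.1:ℝ) ∩ Ioi (p.2.2:ℝ)) with h𝒲₃
  set 𝒲₄ : Set (Set ℝ) := Set.range
    (fun p : ↥𝒰₀ × ℚ × ℚ => connectedComponentIn p.1.val (p.2.1:ℝ) ∩ Iio (p.2.2:ℝ)) with h𝒲₄
  refine ⟨𝒰₀ ∪ 𝒲₂ ∪ 𝒲₃ ∪ 𝒲₄, ?_, ?_, ?_⟩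
  · -- openness
    rintro W (((hW | hW) | hW) | hW)
    · exact ho W hW
    · obtain ⟨p, rfl⟩ := hW
      exact Wbig_open (ho _ p.1.2) _
    · obtain ⟨p, rfl⟩ := hW
      exact ((ho _ p.1.2).connectedComponentIn).inter isOpen_Ioi
    · obtain ⟨p, rfl⟩ := hW
      exact ((ho _ p.1.2).connectedComponentIn).inter isOpen_Iio
  · -- cardinality
    have hQQ : #(ℚ × ℚ) = ℵ₀ := by
      simp [Cardinal.mk_prod, Cardinal.mk_denumerable]
    have h2 : #𝒲₂ ≤ κ := by
      refine le_trans Cardinal.mk_range_le ?_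
      have : #(↥𝒰₀ × ↥𝒮) = #𝒰₀ * #𝒮 := by simp [Cardinal.mk_prod]
      rw [this]
      calc #𝒰₀ * #𝒮 ≤ κ * κ := mul_le_mul' hc h𝒮c
        _ = κ := Cardinal.mul_eq_self hκ
    have h3 : #𝒲₃ ≤ κ := by
      refine le_trans Cardinal.mk_range_le ?_
      have : #(↥𝒰₀ × ℚ × ℚ) = #𝒰₀ * ℵ₀ := by simp [Cardinal.mk_prod, hQQ]
      rw [this]
      calc #𝒰₀ * ℵ₀ ≤ κ * κ := mul_le_mul' hc hκ
        _ = κ := Cardinal.mul_eq_self hκ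
    have h4 : #𝒲₄ ≤ κ := by
      refine le_trans Cardinal.mk_range_le ?_
      have : #(↥𝒰₀ × ℚ × ℚ) = #𝒰₀ * ℵ₀ := by simp [Cardinal.mk_prod, hQQ]
      rw [this]
      calc #𝒰₀ * ℵ₀ ≤ κ * κ := mul_le_mul' hc hκ
        _ = κ := Cardinal.mul_eq_self hκ
    have hκκ : κ + κ = κ := Cardinal.add_eq_self hκ
    calc #((𝒰₀ ∪ 𝒲₂ ∪ 𝒲₃ ∪ 𝒲₄ : Set (Set ℝ))) ≤ #((𝒰₀ ∪ 𝒲₂ ∪ 𝒲₃ : Set (Set ℝ))) + #𝒲₄ :=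
        Cardinal.mk_union_le _ _
      _ ≤ (#((𝒰₀ ∪ 𝒲₂ : Set (Set ℝ))) + #𝒲₃) + #𝒲₄ :=
        add_le_add_left (Cardinal.mk_union_le _ _) _
      _ ≤ ((#𝒰₀ + #𝒲₂) + #𝒲₃) + #𝒲₄ :=
        add_le_add_left (add_le_add_left (Cardinal.mk_union_le _ _) _) _
      _ ≤ ((κ + κ) + κ) + κ := by
        exact add_le_add (add_le_add (add_le_add hc h2) h3) h4
      _ = κ := by rw [hκκ, hκκ, hκκ]
  · -- the strong splitting property
    intro t hti L htL
    have hAinf : (Set.range t).Infinite := Set.infinite_range_of_injective hti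
    obtain ⟨U, hU𝒰, hUsp⟩ := hsp _ hAinf
    have hUo : IsOpen U := ho U hU𝒰
    have hIn : {k | t k ∈ U}.Infinite := by
      have hsub : Set.range t ∩ U ⊆ t '' {k | t k ∈ U} := by
        rintro x ⟨⟨k, rfl⟩, hxU⟩
        exact ⟨k, hxU, rfl⟩
      exact Set.Infinite.of_image _ (hUsp.1.mono hsub)
    have hOut : {k | t k ∉ U}.Infinite := by
      have hsub : Set.range t \ U ⊆ t '' {k | t k ∉ U} := by
        rintro x ⟨⟨k, rfl⟩, hxU⟩
        exact ⟨k, hxU, rfl⟩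
      exact Set.Infinite.of_image _ (hUsp.2.mono hsub)
    by_cases hstr : {k | t k ∉ closure U}.Infinite
    · exact ⟨U, Or.inl (Or.inl (Or.inl hU𝒰)), hIn, hstr⟩
    have hLU : L ∉ U := by
      have hfreq : ∃ᶠ k in atTop, t k ∈ Uᶜ := by
        rw [Nat.frequently_atTop_iff_infinite]
        exact hOut
      have : L ∈ closure Uᶜ := mem_closure_of_frequently_of_tendsto hfreq htL
      rwa [IsClosed.closure_eq (isClosed_compl_iff.mpr hUo)] at this
    by_cases h2a : ∃ q : ℚ, (q:ℝ) ∈ U ∧ {k | t k ∈ connectedComponentIn U (q:ℝ)}.Infinite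
    · -- Case 2a : one component contains infinitely many points of the sequence
      obtain ⟨q, hqU, hqinf⟩ := h2a
      set C := connectedComponentIn U (q:ℝ) with hCdef
      have hCo : IsOpen C := hUo.connectedComponentIn
      have hCU : C ⊆ U := connectedComponentIn_subset _ _
      have hCoc : C.OrdConnected := isPreconnected_connectedComponentIn.ordConnected
      have hCq : (q:ℝ) ∈ C := mem_connectedComponentIn hqU
      have hLC : L ∈ closure C := by
        refine mem_closure_of_frequently_of_tendsto ?_ htL
        rw [Nat.frequently_atTop_iff_infinite]
        exact hqinf
      have hLnC : L ∉ C := fun h => hLU (hCU h)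
      have hside : (∀ c ∈ C, c < L) ∨ (∀ c ∈ C, L < c) := by
        by_contra hcon
        push_neg at hcon
        obtain ⟨⟨c1, hc1C, hc1⟩, ⟨c2, hc2C, hc2⟩⟩ := hcon
        exact hLnC (hCoc.out hc2C hc1C ⟨hc2, hc1⟩)
      -- finite exceptional sets machinery
    
      rcases hside with hbelow | habove
      · -- all of C is below L
        have hgt : {k | L < t k}.Infinite := by
          have hev1 : ∀ᶠ k in atTop, (q:ℝ) < t k :=
            htL.eventually (isOpen_Ioi.eventually_mem (hbelow _ hCq))
          have hfin1 : {k | ¬ (q:ℝ) < t k}.Finite := by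
            rw [← Nat.cofinite_eq_atTop] at hev1
            exact hev1
          have hfin2 : {k | t k = L}.Finite := by
            apply Set.Subsingleton.finite
            intro a ha b hb
            exact hti (ha.trans hb.symm)
          apply (((hOut.diff hfin1).diff hfin2).mono)
          rintro k ⟨⟨hkU, hkq⟩, hkL⟩
          simp only [mem_setOf_eq, not_not] at hkq hkL ⊢
          rcases lt_trichotomy (t k) L with hlt | heq | hgt'
          · exfalso
            obtain ⟨V, hV⟩ := mem_closure_iff_nhds.mp hLC _ (isOpen_Ioi.mem_nhds hlt)
            obtain ⟨hVgt, hVC⟩ := hV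
            exact hkU (hCU (hCoc.out hCq hVC ⟨le_of_lt hkq, le_of_lt hVgt⟩))
          · exact absurd heq hkL
          · exact hgt'
        obtain ⟨p, hpL⟩ := exists_rat_lt L
        refine ⟨C ∩ Ioi (p:ℝ), Or.inl (Or.inr ⟨⟨⟨U, hU𝒰⟩, q, p⟩, rfl⟩), ?_, ?_⟩
        · have hev2 : ∀ᶠ k in atTop, (p:ℝ) < t k :=
            htL.eventually (isOpen_Ioi.eventually_mem hpL)
          have hfin : {k | ¬ (p:ℝ) < t k}.Finite := by
            rw [← Nat.cofinite_eq_atTop] at hev2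
            exact hev2
          apply (hqinf.diff hfin).mono
          rintro k ⟨hkC, hkp⟩
          simp only [mem_setOf_eq, not_not] at hkp
          exact ⟨hkC, hkp⟩
        · apply hgt.mono
          intro k hk hmem
          have h1 : closure (C ∩ Ioi (p:ℝ)) ⊆ Iic L := by
            apply closure_minimal ?_ isClosed_Iic
            rintro z ⟨hzC, -⟩
            exact le_of_lt (hbelow z hzC)
          have h2 := h1 hmem
          rw [mem_Iic] at h2
          exact absurd h2 (not_le.mpr hk)
      · -- all of C is above L  (mirror)
        have hgt : {k | t k < L}.Infinite := by
          have hev1 : ∀ᶠ k in atTop, t k < (q:ℝ) :=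
            htL.eventually (isOpen_Iio.eventually_mem (habove _ hCq))
          have hfin1 : {k | ¬ t k < (q:ℝ)}.Finite := by
            rw [← Nat.cofinite_eq_atTop] at hev1
            exact hev1
          have hfin2 : {k | t k = L}.Finite := by
            apply Set.Subsingleton.finite
            intro a ha b hb
            exact hti (ha.trans hb.symm)
          apply (((hOut.diff hfin1).diff hfin2).mono)
          rintro k ⟨⟨hkU, hkq⟩, hkL⟩
          simp only [mem_setOf_eq, not_not] at hkq hkL ⊢
          rcases lt_trichotomy (t k) L with hlt | heq | hgt'
          · exact hlt
          · exact absurd heq hkL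
          · exfalso
            obtain ⟨V, hV⟩ := mem_closure_iff_nhds.mp hLC _ (isOpen_Iio.mem_nhds hgt')
            obtain ⟨hVlt, hVC⟩ := hV
            exact hkU (hCU (hCoc.out hVC hCq ⟨le_of_lt hVlt, le_of_lt hkq⟩))
        obtain ⟨p, hpL⟩ := exists_rat_gt L
        refine ⟨C ∩ Iio (p:ℝ), Or.inr ⟨⟨⟨U, hU𝒰⟩, q, p⟩, rfl⟩, ?_, ?_⟩
        · have hev2 : ∀ᶠ k in atTop, t k < (p:ℝ) :=
            htL.eventually (isOpen_Iio.eventually_mem hpL)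
          have hfin : {k | ¬ t k < (p:ℝ)}.Finite := by
            rw [← Nat.cofinite_eq_atTop] at hev2
            exact hev2
          apply (hqinf.diff hfin).mono
          rintro k ⟨hkC, hkp⟩
          simp only [mem_setOf_eq, not_not] at hkp
          exact ⟨hkC, hkp⟩
        · apply hgt.mono
          intro k hk hmem
          have h1 : closure (C ∩ Iio (p:ℝ)) ⊆ Ici L := by
            apply closure_minimal ?_ isClosed_Ici
            rintro z ⟨hzC, -⟩
            exact le_of_lt (habove z hzC)
          have h2 := h1 hmem
          rw [mem_Ici] at h2
          exact absurd h2 (not_le.mpr hk)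
    · -- Case 2b : all components meet the sequence finitely
      push_neg at h2a
      set ρ : ℕ → ℚ := fun k => repC (connectedComponentIn U (t k)) with hρ
      have hrepmem : ∀ k, t k ∈ U → ((ρ k : ℚ):ℝ) ∈ connectedComponentIn U (t k) :=
        fun k hk => repC_mem (exists_rat_mem_cc hUo hk)
      have hccq : ∀ k, t k ∈ U →
          connectedComponentIn U ((ρ k : ℚ):ℝ) = connectedComponentIn U (t k) :=
        fun k hk => (connectedComponentIn_eq (hrepmem k hk)).symm
      have hρU : ∀ k, t k ∈ U → ((ρ k : ℚ):ℝ) ∈ U :=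
        fun k hk => connectedComponentIn_subset _ _ (hrepmem k hk)
      have hρrep : ∀ k, t k ∈ U → IsRep U (ρ k) := by
        intro k hk
        refine ⟨hρU k hk, ?_⟩
        rw [hccq k hk]
      set R : Set ℚ := ρ '' {k | t k ∈ U} with hR
      have hRU : ∀ q ∈ R, (q:ℝ) ∈ U := by
        rintro _ ⟨k, hk, rfl⟩
        exact hρU k hk
      have hRrep : ∀ q ∈ R, IsRep U q := by
        rintro _ ⟨k, hk, rfl⟩
        exact hρrep k hk
      have hRinf : R.Infinite := by
        by_contra hRfin
        rw [Set.not_infinite] at hRfin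
        have hsub : {k | t k ∈ U} ⊆ ⋃ q ∈ R, {k | t k ∈ connectedComponentIn U (q:ℝ)} := by
          intro k hk
          apply Set.mem_biUnion (Set.mem_image_of_mem ρ hk)
          rw [mem_setOf_eq, hccq k hk]
          exact mem_connectedComponentIn hk
        have hfin : (⋃ q ∈ R, {k | t k ∈ connectedComponentIn U (q:ℝ)}).Finite :=
          hRfin.biUnion (fun q hq => (h2a q (hRU q hq)))
        exact hIn (hfin.subset hsub)
      obtain ⟨S, hS𝒮, hRS1, hRS2⟩ := h𝒮 R hRinf
      -- choose, for each q ∈ R, an index hitting its component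
      have hsel : ∀ q ∈ R, ∃ k, t k ∈ U ∧ ρ k = q := by
        rintro _ ⟨k, hk, rfl⟩
        exact ⟨k, hk, rfl⟩
      -- membership of components of S-represented rationals in Wbig
      refine ⟨Wbig U S, Or.inl (Or.inl (Or.inr ⟨⟨⟨U, hU𝒰⟩, ⟨S, hS𝒮⟩⟩, rfl⟩)), ?_, ?_⟩
      · -- infinitely many t k ∈ Wbig U S
        haveI : Infinite ↥(R ∩ S) := hRS1.to_subtype
        set ψ : ↥(R ∩ S) → ℕ := fun q => (hsel q.1 q.2.1).choose with hψ
        have hψ1 : ∀ q : ↥(R ∩ S), t (ψ q) ∈ U ∧ ρ (ψ q) = q.1 :=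
          fun q => (hsel q.1 q.2.1).choose_spec
        refine Set.infinite_of_injective_forall_mem (f := ψ) ?_ ?_
        · intro a b hab
          apply Subtype.ext
          rw [← (hψ1 a).2, ← (hψ1 b).2, hab]
        · intro q
          obtain ⟨hqU', hqρ⟩ := hψ1 q
          rw [mem_setOf_eq]
          apply Set.mem_biUnion (show q.1 ∈ {q : ℚ | q ∈ S ∧ IsRep U q} from
            ⟨q.2.2, hRrep q.1 q.2.1⟩)
          rw [← hqρ, hccq _ hqU']
          exact mem_connectedComponentIn hqU'
      · -- infinitely many t k ∉ closure (Wbig U S)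
        haveI : Infinite ↥(R \ S) := hRS2.to_subtype
        set ψ : ↥(R \ S) → ℕ := fun q => (hsel q.1 q.2.1).choose with hψ
        have hψ1 : ∀ q : ↥(R \ S), t (ψ q) ∈ U ∧ ρ (ψ q) = q.1 :=
          fun q => (hsel q.1 q.2.1).choose_spec
        refine Set.infinite_of_injective_forall_mem (f := ψ) ?_ ?_
        · intro a b hab
          apply Subtype.ext
          rw [← (hψ1 a).2, ← (hψ1 b).2, hab]
        · intro q
          obtain ⟨hqU', hqρ⟩ := hψ1 q
          rw [mem_setOf_eq]
          -- t (ψ q) lies in the open component of q, which is disjoint from Wbig U S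
          have hmemq : t (ψ q) ∈ connectedComponentIn U ((q.1 : ℚ):ℝ) := by
            rw [← hqρ, hccq _ hqU']
            exact mem_connectedComponentIn hqU'
          have hdisj : connectedComponentIn U ((q.1 : ℚ):ℝ) ∩ Wbig U S = ∅ := by
            rw [Set.eq_empty_iff_forall_notMem]
            rintro z ⟨hz1, hz2⟩
            rw [Wbig, Set.mem_iUnion₂] at hz2
            obtain ⟨q', ⟨hq'S, hq'rep⟩, hz2⟩ := hz2
            rcases cc_eq_or_disjoint U ((q.1:ℚ):ℝ) ((q':ℚ):ℝ) with heq | hdis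
            · have : q.1 = q' :=
                isRep_eq_of_cc_eq (hRrep q.1 q.2.1) hq'rep heq
              exact q.2.2 (this ▸ hq'S)
            · rw [Set.eq_empty_iff_forall_notMem] at hdis
              exact hdis z ⟨hz1, hz2⟩
          -- an open set disjoint from W avoids its closure
          intro hcl
          have hWsub : Wbig U S ⊆ (connectedComponentIn U ((q.1 : ℚ):ℝ))ᶜ := by
            intro z hz hz2
            rw [Set.eq_empty_iff_forall_notMem] at hdisj
            exact hdisj z ⟨hz2, hz⟩
          have : closure (Wbig U S) ⊆ (connectedComponentIn U ((q.1 : ℚ):ℝ))ᶜ :=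
            closure_minimal hWsub (isClosed_compl_iff.mpr hUo.connectedComponentIn)
          exact this hcl hmemq

lemma continuous_cantorFunction : Continuous (Cardinal.cantorFunction (1/3)) := by
  apply continuous_tsum (u := fun n => (1/3 : ℝ)^n)
  · intro n
    have h1 : Continuous fun b : Bool => cond b ((1/3:ℝ)^n) 0 :=
      continuous_of_discreteTopology
    exact h1.comp (continuous_apply n)
  · exact summable_geometric_of_lt_one (by norm_num) (by norm_num)
  · intro n f
    rcases Bool.eq_false_or_eq_true (f n) with h | h
    · rw [Cardinal.cantorFunctionAux_true h, Real.norm_eq_abs,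
        abs_of_nonneg (by positivity)]
    · rw [Cardinal.cantorFunctionAux_false h, norm_zero]
      positivity

lemma exists_strong_family_cantor {κ : Cardinal.{0}} (hκ : ℵ₀ ≤ κ)
    (h₁ : splittingNumber ℝ ≤ κ) :
    ∃ 𝒰 : Set (Set (ℕ → Bool)), (∀ U ∈ 𝒰, IsOpen U) ∧ #𝒰 ≤ κ ∧
      ∀ t : ℕ → (ℕ → Bool), Function.Injective t → ∀ L, Tendsto t atTop (nhds L) →
        ∃ U ∈ 𝒰, {k | t k ∈ U}.Infinite ∧ {k | t k ∉ closure U}.Infinite := by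
  obtain ⟨𝒰₀, ho, hsp, hc⟩ := exists_splitting_family h₁
  obtain ⟨𝒲, hWo, hWc, hW⟩ := exists_strong_family hκ 𝒰₀ ho hsp hc
  set e : (ℕ → Bool) → ℝ := Cardinal.cantorFunction (1/3) with he
  have hecont : Continuous e := continuous_cantorFunction
  have heinj : Function.Injective e :=
    Cardinal.cantorFunction_injective (by norm_num) (by norm_num)
  refine ⟨(fun W => e ⁻¹' W) '' 𝒲, ?_, le_trans Cardinal.mk_image_le hWc, ?_⟩
  · rintro _ ⟨W, hW𝒲, rfl⟩
    exact (hWo W hW𝒲).preimage hecont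
  · intro t hti L htL
    have h1 : Function.Injective (fun k => e (t k)) := heinj.comp hti
    have h2 : Tendsto (fun k => e (t k)) atTop (nhds (e L)) :=
      (hecont.tendsto L).comp htL
    obtain ⟨W, hW𝒲, hin, hout⟩ := hW _ h1 _ h2
    refine ⟨e ⁻¹' W, ⟨W, hW𝒲, rfl⟩, hin, ?_⟩
    apply hout.mono
    intro k hk hcl
    exact hk (hecont.closure_preimage_subset W hcl)

lemma exists_basis_pi {I : Type} (hI : Infinite I) :
    ∃ B : Set (Set (I → Bool)), TopologicalSpace.IsTopologicalBasis B ∧ #B ≤ #I := by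
  classical
  set cyl : (Σ s : Finset I, (↥s → Bool)) → Set (I → Bool) :=
    fun d => {z | ∀ i : ↥d.1, z i = d.2 i} with hcyl
  refine ⟨Set.range cyl, ?_, ?_⟩
  · apply TopologicalSpace.isTopologicalBasis_of_isOpen_of_nhds
    · rintro _ ⟨d, rfl⟩
      have : cyl d = ⋂ i : ↥d.1, {z : I → Bool | z i = d.2 i} := by
        ext z
        simp [hcyl, Set.mem_iInter]
      rw [this]
      apply isOpen_iInter_of_finite
      intro i
      have h := ((continuous_apply (i : I) :
          Continuous fun z : I → Bool => z i)).isOpen_preimage ({d.2 i} : Set Bool)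
        (isOpen_discrete _)
      exact h
    · intro a u hau hu
      obtain ⟨F, u', hu', hsub⟩ := isOpen_pi_iff.mp hu a hau
      refine ⟨cyl ⟨F, fun i => a i⟩, ⟨⟨F, fun i => a i⟩, rfl⟩, ?_, ?_⟩
      · intro i
        rfl
      · intro z hz
        apply hsub
        intro i hi
        have : z i = a i := hz ⟨i, hi⟩
        rw [this]
        exact (hu' i hi).2
  · refine le_trans Cardinal.mk_range_le ?_
    have h1 : #(Σ s : Finset I, (↥s → Bool)) ≤ #(Finset I) * ℵ₀ := by
      rw [← Cardinal.sum_const']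
      rw [Cardinal.mk_sigma]
      apply Cardinal.sum_le_sum
      intro s
      exact le_of_lt (Cardinal.lt_aleph0_of_finite _)
    have h2 : #(Finset I) = #I := Cardinal.mk_finset_of_infinite I
    have h3 : ℵ₀ ≤ #I := Cardinal.infinite_iff.mp hI
    calc #(Σ s : Finset I, (↥s → Bool)) ≤ #(Finset I) * ℵ₀ := h1
      _ = #I * ℵ₀ := by rw [h2]
      _ ≤ #I * #I := mul_le_mul' le_rfl h3
      _ = #I := Cardinal.mul_eq_self h3

/-- The transfinite recursion defining the coordinates of the dense sequence. -/
def recF (I : Type) [LinearOrder I] (hwf : WellFounded ((· < ·) : I → I → Prop))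
    (τ : I → (Set I × Set (ℕ → Bool)) ⊕ ℕ) (eC : Set I → ℕ → I) : I → ℕ → Bool :=
  hwf.fix (fun j rec => Sum.elim
    (fun p => fun n => bofProp
      ((fun m => if h : eC p.1 m < j then rec (eC p.1 m) h n else false) ∈ p.2))
    (fun m => fun n => decide (n = m)) (τ j))

lemma recF_eq (I : Type) [LinearOrder I] (hwf : WellFounded ((· < ·) : I → I → Prop))
    (τ : I → (Set I × Set (ℕ → Bool)) ⊕ ℕ) (eC : Set I → ℕ → I) (j : I) :
    recF I hwf τ eC j = Sum.elim
      (fun p => fun n => bofProp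
        ((fun m => if _ : eC p.1 m < j then recF I hwf τ eC (eC p.1 m) n else false) ∈ p.2))
      (fun m => fun n => decide (n = m)) (τ j) :=
  hwf.fix_eq _ j

lemma recF_inr (I : Type) [LinearOrder I] (hwf : WellFounded ((· < ·) : I → I → Prop))
    (τ : I → (Set I × Set (ℕ → Bool)) ⊕ ℕ) (eC : Set I → ℕ → I) {j : I} {m : ℕ}
    (h : τ j = Sum.inr m) : ∀ n, recF I hwf τ eC j n = decide (n = m) := by
  intro n
  rw [recF_eq, h, Sum.elim_inr]

lemma recF_inl (I : Type) [LinearOrder I] (hwf : WellFounded ((· < ·) : I → I → Prop))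
    (τ : I → (Set I × Set (ℕ → Bool)) ⊕ ℕ) (eC : Set I → ℕ → I) {j : I}
    {p : Set I × Set (ℕ → Bool)} (h : τ j = Sum.inl p)
    (hlt : ∀ m, eC p.1 m < j) :
    ∀ n, recF I hwf τ eC j n = bofProp ((fun m => recF I hwf τ eC (eC p.1 m) n) ∈ p.2) := by
  intro n
  rw [recF_eq, h, Sum.elim_inl]
  have harg : (fun m => if _ : eC p.1 m < j then recF I hwf τ eC (eC p.1 m) n else false)
      = fun m => recF I hwf τ eC (eC p.1 m) n := by
    funext m
    exact dif_pos (hlt m)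
  rw [harg]

end

end Stmt7Aux

/-- If `𝔰(ℝ) ≤ κ = cof([κ]^{ℵ₀}, ⊆)`, then `𝔷 ≤ κ`: there is an infinite compact Hausdorff
space of weight at most `κ` with no non-trivial convergent sequence. -/
theorem stmt7 (κ : Cardinal.{0}) (h₁ : splittingNumber ℝ ≤ κ)
    (h₂ : cofCountableSubsets (Quotient.out κ) = κ) :
    ∃ (X : Type) (t : TopologicalSpace X), Infinite X ∧ @CompactSpace X t ∧ @T2Space X t ∧
      (∃ B : Set (Set X), @TopologicalSpace.IsTopologicalBasis X t B ∧ #B ≤ κ) ∧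
      ¬ ∃ (g : ℕ → X) (x : X), Function.Injective g ∧
          Filter.Tendsto g Filter.atTop (@nhds X t x) := by
  classical
  have hκ : ℵ₀ < κ := Stmt7Aux.aleph0_lt_kappa h₁ h₂
  have hImk : #κ.ord.ToType = κ := by rw [Cardinal.mk_toType, Cardinal.card_ord]
  have hIinf : Infinite κ.ord.ToType := by
    rw [Cardinal.infinite_iff, hImk]
    exact le_of_lt hκ
  haveI := hIinf
  obtain ⟨𝒞, h𝒞cnt, h𝒞cof, h𝒞card⟩ := Stmt7Aux.exists_cof_family_of_eq hImk h₂
  obtain ⟨𝒰s, hUso, hUsc, hUssp⟩ := Stmt7Aux.exists_strong_family_cantor (le_of_lt hκ) h₁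
  -- the task type
  set Tasks := ((↥𝒞 × ↥𝒰s) ⊕ ℕ : Type) with hTasks
  have hT0 : ℵ₀ ≤ #Tasks := by
    have : #ℕ ≤ #Tasks := Cardinal.mk_le_of_injective (f := Sum.inr) Sum.inr_injective
    rwa [Cardinal.mk_nat] at this
  have hTκ : #Tasks ≤ κ := by
    have h1 : #Tasks = #(↥𝒞 × ↥𝒰s) + ℵ₀ := by
      simp [hTasks, Cardinal.mk_sum]
    have h2 : #(↥𝒞 × ↥𝒰s) ≤ κ := by
      have : #(↥𝒞 × ↥𝒰s) = #𝒞 * #𝒰s := by simp [Cardinal.mk_prod]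
      rw [this]
      calc #𝒞 * #𝒰s ≤ κ * κ := mul_le_mul' h𝒞card hUsc
        _ = κ := Cardinal.mul_eq_self (le_of_lt hκ)
    rw [h1]
    calc #(↥𝒞 × ↥𝒰s) + ℵ₀ ≤ κ + κ := add_le_add h2 (le_of_lt hκ)
      _ = κ := Cardinal.add_eq_self (le_of_lt hκ)
  -- a pairing of the index set with the tasks
  have hg : Nonempty (κ.ord.ToType ≃ (κ.ord.ToType × Tasks)) := by
    rw [← Cardinal.eq]
    have : #(κ.ord.ToType × Tasks) = κ * #Tasks := by simp [Cardinal.mk_prod, hImk]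
    rw [hImk, this, Cardinal.mul_eq_max (le_of_lt hκ) hT0, max_eq_left hTκ]
  obtain ⟨g⟩ := hg
  set τ : κ.ord.ToType → (Set κ.ord.ToType × Set (ℕ → Bool)) ⊕ ℕ :=
    fun i => Sum.elim (fun p : ↥𝒞 × ↥𝒰s => Sum.inl (p.1.val, p.2.val)) Sum.inr (g i).2 with hτ
  -- fibers of τ over tasks are unbounded
  have hfiber : ∀ (tk : Tasks) (b : κ.ord.ToType),
      ∃ j, τ j = Sum.elim (fun p : ↥𝒞 × ↥𝒰s => Sum.inl (p.1.val, p.2.val)) Sum.inr tk ∧ b ≤ j := by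
    intro tk b
    by_contra hno
    push_neg at hno
    -- the fiber of g over tk embeds all of I but is contained in Iic b
    have hsub : ∀ i : κ.ord.ToType, g.symm (i, tk) ≤ b := by
      intro i
      have h1 : τ (g.symm (i, tk)) =
          Sum.elim (fun p : ↥𝒞 × ↥𝒰s => Sum.inl (p.1.val, p.2.val)) Sum.inr tk := by
        rw [hτ]
        simp only [Equiv.apply_symm_apply]
      by_contra hgt
      exact absurd h1 (fun hh => absurd (hno _ hh) (by push_neg; exact le_of_not_ge hgt))
    have hinj : Function.Injective (fun i : κ.ord.ToType => (⟨g.symm (i, tk), hsub i⟩ :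
        ↥(Set.Iic b))) := by
      intro a c hac
      have := congrArg Subtype.val hac
      have h2 := g.symm.injective this
      exact (Prod.mk.injEq _ _ _ _).mp h2 |>.1
    have hcard : #κ.ord.ToType ≤ #(Set.Iic b) := Cardinal.mk_le_of_injective hinj
    rw [hImk] at hcard
    exact absurd hcard (not_le.mpr (Stmt7Aux.card_Iic_lt hκ b))
  -- enumerations of countable sets
  set eC : Set κ.ord.ToType → ℕ → κ.ord.ToType :=
    fun C => if h : C.Countable ∧ C.Nonempty then (h.1.exists_eq_range h.2).choose
      else fun _ => Classical.arbitrary _ with heCdef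
  have heC : ∀ C : Set κ.ord.ToType, C.Countable → C.Nonempty → C = Set.range (eC C) := by
    intro C hc hn
    rw [heCdef]
    simp only [dif_pos (⟨hc, hn⟩ : C.Countable ∧ C.Nonempty)]
    exact (hc.exists_eq_range hn).choose_spec
  -- the recursion
  have hwf : WellFounded ((· < ·) : κ.ord.ToType → κ.ord.ToType → Prop) := IsWellFounded.wf
  set f : κ.ord.ToType → ℕ → Bool := Stmt7Aux.recF _ hwf τ eC with hf
  set pt : ℕ → κ.ord.ToType → Bool := fun n j => f j n with hpt
  -- injectivity of the dense sequence
  have hptinj : Function.Injective pt := by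
    intro a c hac
    by_contra hne
    obtain ⟨j, hτj, -⟩ := hfiber (Sum.inr a) (Classical.arbitrary _)
    have h1 : pt a j = true := by
      rw [hpt]
      simp only []
      rw [hf, Stmt7Aux.recF_inr _ hwf τ eC hτj a]
      simp
    have h2 : pt c j = false := by
      rw [hpt]
      simp only []
      rw [hf, Stmt7Aux.recF_inr _ hwf τ eC hτj c]
      simp only [decide_eq_false_iff_not]
      exact fun hh => hne hh.symm
    rw [hac] at h1
    rw [h1] at h2
    exact Bool.noConfusion h2
  refine ⟨↥(closure (Set.range pt)), inferInstance, ?_, ?_, ?_, ?_, ?_⟩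
  · -- infinite
    exact ((Set.infinite_range_of_injective hptinj).mono subset_closure).to_subtype
  · -- compact
    exact isCompact_iff_compactSpace.mp (IsClosed.isCompact isClosed_closure)
  · -- T2
    infer_instance
  · -- weight
    obtain ⟨B, hB, hBc⟩ := Stmt7Aux.exists_basis_pi hIinf
    refine ⟨(fun S => (Subtype.val : ↥(closure (Set.range pt)) → (κ.ord.ToType → Bool)) ⁻¹' S)
        '' B, ?_, ?_⟩
    · exact hB.isInducing Topology.IsInducing.subtypeVal
    · exact le_trans Cardinal.mk_image_le (le_trans hBc (le_of_eq hImk))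
  · -- no nontrivial convergent sequences
    rintro ⟨gs, x, hginj, htend⟩
    set y : ℕ → (κ.ord.ToType → Bool) := fun k => (gs k).val with hy
    have hyinj : Function.Injective y := by
      intro a c h
      exact hginj (Subtype.ext h)
    have hytend : Tendsto y atTop (nhds x.val) :=
      ((continuous_subtype_val.tendsto x).comp htend)
    have hcoord : ∀ j, ∀ᶠ k in atTop, y k j = x.val j := by
      intro j
      have h1 : Tendsto (fun k => y k j) atTop (nhds (x.val j)) :=
        (((continuous_apply j).tendsto x.val).comp hytend)
      rw [nhds_discrete] at h1
      exact tendsto_pure.mp h1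
    -- separating coordinates
    have hsep' : ∀ p : ℕ × ℕ, ∃ j, p.1 ≠ p.2 → y p.1 j ≠ y p.2 j := by
      intro p
      by_cases h : p.1 = p.2
      · exact ⟨Classical.arbitrary _, fun hc => absurd h hc⟩
      · have hyne : y p.1 ≠ y p.2 := fun hc => h (hyinj hc)
        obtain ⟨j, hj⟩ := Function.ne_iff.mp hyne
        exact ⟨j, fun _ => hj⟩
    choose d hd using hsep'
    obtain ⟨C, hC𝒞, hDC⟩ := h𝒞cof (Set.range d) (Set.countable_range d)
    have hCcnt : C.Countable := h𝒞cnt C hC𝒞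
    have hCne : C.Nonempty := ⟨d (0,1), hDC (Set.mem_range_self _)⟩
    -- traces
    set tr : ℕ → (ℕ → Bool) := fun k m => y k (eC C m) with htr
    set trl : ℕ → Bool := fun m => x.val (eC C m) with htrl
    have htrinj : Function.Injective tr := by
      intro a c hac
      by_contra hne
      have hj := hd (a,c) hne
      have hmem : d (a,c) ∈ C := hDC (Set.mem_range_self _)
      rw [heC C hCcnt hCne] at hmem
      obtain ⟨m, hm⟩ := hmem
      apply hj
      have := congrFun hac m
      rw [htr] at this
      simp only [] at this
      rw [← hm]
      exact this
    have htrtend : Tendsto tr atTop (nhds trl) := by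
      rw [tendsto_pi_nhds]
      intro m
      exact (((continuous_apply (eC C m)).tendsto x.val).comp hytend)
    obtain ⟨U, hU𝒰s, hUin, hUout⟩ := hUssp tr htrinj trl htrtend
    -- the splitting coordinate
    obtain ⟨b, hb⟩ := Stmt7Aux.countable_bounded hκ h₂ hCcnt
    obtain ⟨j, hτj, hbj⟩ := hfiber (Sum.inl (⟨C, hC𝒞⟩, ⟨U, hU𝒰s⟩)) b
    simp only [Sum.elim_inl] at hτj
    have hltj : ∀ m, eC C m < j := by
      intro m
      apply lt_of_lt_of_le _ hbj
      apply hb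
      have hmr : eC C m ∈ Set.range (eC C) := Set.mem_range_self m
      rwa [← heC C hCcnt hCne] at hmr
    have hfj : ∀ n, f j n = Stmt7Aux.bofProp ((fun m => f (eC C m) n) ∈ U) := by
      intro n
      rw [hf]
      exact Stmt7Aux.recF_inl _ hwf τ eC hτj hltj n
    -- the trace map is continuous
    have hTcont : Continuous (fun w : κ.ord.ToType → Bool => (fun m => w (eC C m))) :=
      continuous_pi (fun m => continuous_apply (eC C m))
    -- claim 1 : points of the closure with j-th coordinate true have trace in closure U
    have hXc1 : ∀ z ∈ closure (Set.range pt), z j = true → (fun m => z (eC C m)) ∈ closure U := by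
      intro z hz hzj
      by_contra hcl
      have hopen : IsOpen ({w : κ.ord.ToType → Bool | w j = true} ∩
          (fun w : κ.ord.ToType → Bool => (fun m => w (eC C m))) ⁻¹' (closure U)ᶜ) := by
        apply IsOpen.inter
        · have h := ((continuous_apply j :
              Continuous fun w : κ.ord.ToType → Bool => w j)).isOpen_preimage
            ({true} : Set Bool) (isOpen_discrete _)
          exact h
        · exact hTcont.isOpen_preimage _ (isOpen_compl_iff.mpr isClosed_closure)
      have hzmem : z ∈ ({w : κ.ord.ToType → Bool | w j = true} ∩
          (fun w : κ.ord.ToType → Bool => (fun m => w (eC C m))) ⁻¹' (closure U)ᶜ) := ⟨hzj, hcl⟩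
      obtain ⟨w, hwmem, hwrange⟩ := mem_closure_iff.mp hz _ hopen hzmem
      obtain ⟨n, rfl⟩ := hwrange
      have h1 : pt n j = true := hwmem.1
      rw [show pt n j = f j n from rfl, hfj n, Stmt7Aux.bofProp_eq_true] at h1
      exact hwmem.2 (subset_closure h1)
    -- claim 2 : points of the closure with j-th coordinate false have trace outside U
    have hXc2 : ∀ z ∈ closure (Set.range pt), z j = false → (fun m => z (eC C m)) ∉ U := by
      intro z hz hzj hzU
      have hopen : IsOpen ({w : κ.ord.ToType → Bool | w j = false} ∩
          (fun w : κ.ord.ToType → Bool => (fun m => w (eC C m))) ⁻¹' U) := by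
        apply IsOpen.inter
        · have h := ((continuous_apply j :
              Continuous fun w : κ.ord.ToType → Bool => w j)).isOpen_preimage
            ({false} : Set Bool) (isOpen_discrete _)
          exact h
        · exact hTcont.isOpen_preimage _ (hUso U hU𝒰s)
      have hzmem : z ∈ ({w : κ.ord.ToType → Bool | w j = false} ∩
          (fun w : κ.ord.ToType → Bool => (fun m => w (eC C m))) ⁻¹' U) := ⟨hzj, hzU⟩
      obtain ⟨w, hwmem, hwrange⟩ := mem_closure_iff.mp hz _ hopen hzmem
      obtain ⟨n, rfl⟩ := hwrange
      have h1 : pt n j = false := hwmem.1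
      rw [show pt n j = f j n from rfl, hfj n, Stmt7Aux.bofProp_eq_false] at h1
      exact h1 hwmem.2
    -- derive the contradiction
    obtain ⟨N, hN⟩ := eventually_atTop.mp (hcoord j)
    rcases Bool.eq_false_or_eq_true (x.val j) with hxj | hxj
    · -- x j = true : eventually traces in closure U, contradicting hUout
      have : {k | tr k ∉ closure U} ⊆ Set.Iio N := by
        intro k hk
        by_contra hkN
        apply hk
        have hyk : y k j = true := by rw [hN k (le_of_not_gt hkN), hxj]
        exact hXc1 (y k) (gs k).2 hyk
      exact hUout (Set.Finite.subset (Set.finite_Iio N) this)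
    · -- x j = false : eventually traces outside U, contradicting hUin
      have : {k | tr k ∈ U} ⊆ Set.Iio N := by
        intro k hk
        by_contra hkN
        have hyk : y k j = false := by rw [hN k (le_of_not_gt hkN), hxj]
        exact hXc2 (y k) (gs k).2 hyk hk
      exact hUin (Set.Finite.subset (Set.finite_Iio N) this)
end

section
/- cov(ℳ) ≤ 𝔰(ℝ): the covering number of the meager ideal on ℝ is at most the splitting number of the reals. -/
open Cardinal Filter

/-- `cov(ℳ)`: the smallest cardinality of a family of meager subsets of `ℝ` covering `ℝ`. -/
noncomputable def covMeager : Cardinal :=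
  sInf {c : Cardinal | ∃ 𝒞 : Set (Set ℝ), (∀ A ∈ 𝒞, IsMeagre A) ∧
    ⋃₀ 𝒞 = Set.univ ∧ c = #𝒞}

section Aux
open Topology

/-- Every infinite set of reals contains a strictly monotone or strictly antitone sequence. -/
lemma exists_mono_seq_of_infinite {A : Set ℝ} (hA : A.Infinite) :
    (∃ a : ℕ → ℝ, StrictMono a ∧ ∀ n, a n ∈ A) ∨
    (∃ a : ℕ → ℝ, StrictAnti a ∧ ∀ n, a n ∈ A) := by
  classical
  set B : Set ℝ := {x ∈ A | (A ∩ Set.Iio x).Finite} with hB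
  by_cases hBinf : B.Infinite
  · left
    have h : ∀ s : Finset ℝ, (∀ x ∈ s, x ∈ B) → ∃ y, y ∈ B ∧ ∀ x ∈ s, x < y := by
      intro s hs
      have hfin : (⋃ x ∈ s, B ∩ Set.Iic x).Finite := by
        apply Set.Finite.biUnion s.finite_toSet
        intro x hx
        have hxB := hs x hx
        have : B ∩ Set.Iic x ⊆ (A ∩ Set.Iio x) ∪ {x} := by
          rintro y ⟨hyB, hyx⟩
          rcases lt_or_eq_of_le (Set.mem_Iic.1 hyx) with h | h
          · exact Or.inl ⟨hyB.1, h⟩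
          · exact Or.inr h
        exact (hxB.2.union (Set.finite_singleton x)).subset this
      obtain ⟨y, hyB, hy⟩ := (hBinf.diff hfin).nonempty
      refine ⟨y, hyB, fun x hx => ?_⟩
      by_contra hlt
      push_neg at hlt
      exact hy (Set.mem_biUnion hx ⟨hyB, hlt⟩)
    obtain ⟨f, hfB, hmono⟩ := exists_seq_of_forall_finset_exists (· ∈ B) (· < ·)
      (fun s hs => h s hs)
    exact ⟨f, fun m n hmn => hmono m n hmn, fun n => (hfB n).1⟩
  · right
    rw [Set.not_infinite] at hBinf
    have hA' : (A \ B).Infinite := hA.diff hBinf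
    have key : ∀ x ∈ A \ B, (A ∩ Set.Iio x).Infinite := by
      rintro x ⟨hxA, hxB⟩
      by_contra hfin
      rw [Set.not_infinite] at hfin
      exact hxB ⟨hxA, hfin⟩
    have h : ∀ s : Finset ℝ, (∀ x ∈ s, x ∈ A \ B) → ∃ y, y ∈ A \ B ∧ ∀ x ∈ s, y < x := by
      intro s hs
      rcases s.eq_empty_or_nonempty with rfl | hne
      · obtain ⟨y, hy⟩ := hA'.nonempty
        exact ⟨y, hy, by simp⟩
      · set m := s.min' hne with hm
        have hmA := hs m (s.min'_mem hne)
        have : ((A ∩ Set.Iio m) \ B).Infinite := (key m hmA).diff hBinf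
        obtain ⟨y, ⟨⟨hyA, hym⟩, hyB⟩⟩ := this.nonempty
        exact ⟨y, ⟨hyA, hyB⟩, fun x hx => lt_of_lt_of_le hym (s.min'_le x hx)⟩
    obtain ⟨f, hfB, hmono⟩ := exists_seq_of_forall_finset_exists (· ∈ A \ B) (· > ·)
      (fun s hs => h s hs)
    exact ⟨f, fun m n hmn => hmono m n hmn, fun n => (hfB n).1⟩

lemma splits_of_strictMono {A : Set ℝ} (a : ℕ → ℝ) (ha : StrictMono a)
    (hmem : ∀ n, a n ∈ A) : ∃ U : Set ℝ, IsOpen U ∧ Splits U A := by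
  refine ⟨⋃ n, Set.Ioo (a (3 * n)) (a (3 * n + 2)), isOpen_iUnion fun n => isOpen_Ioo, ?_, ?_⟩
  · apply Set.infinite_of_injective_forall_mem (f := fun n : ℕ => a (3 * n + 1))
    · intro m n hmn
      have := ha.injective hmn
      omega
    · intro n
      exact ⟨hmem _, Set.mem_iUnion.2 ⟨n, ha (by omega), ha (by omega)⟩⟩
  · apply Set.infinite_of_injective_forall_mem (f := fun n : ℕ => a (3 * n))
    · intro m n hmn
      have := ha.injective hmn
      omega
    · intro n
      refine ⟨hmem _, ?_⟩
      intro hmem'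
      obtain ⟨m, hm1, hm2⟩ := Set.mem_iUnion.1 hmem'
      rcases le_or_gt n m with h | h
      · exact absurd hm1 (not_lt.2 (ha.monotone (by omega)))
      · exact absurd hm2 (not_lt.2 (ha.monotone (by omega)))

lemma splits_of_strictAnti {A : Set ℝ} (a : ℕ → ℝ) (ha : StrictAnti a)
    (hmem : ∀ n, a n ∈ A) : ∃ U : Set ℝ, IsOpen U ∧ Splits U A := by
  refine ⟨⋃ n, Set.Ioo (a (3 * n + 2)) (a (3 * n)), isOpen_iUnion fun n => isOpen_Ioo, ?_, ?_⟩
  · apply Set.infinite_of_injective_forall_mem (f := fun n : ℕ => a (3 * n + 1))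
    · intro m n hmn
      have := ha.injective hmn
      omega
    · intro n
      exact ⟨hmem _, Set.mem_iUnion.2 ⟨n, ha (by omega), ha (by omega)⟩⟩
  · apply Set.infinite_of_injective_forall_mem (f := fun n : ℕ => a (3 * n))
    · intro m n hmn
      have := ha.injective hmn
      omega
    · intro n
      refine ⟨hmem _, ?_⟩
      intro hmem'
      obtain ⟨m, hm1, hm2⟩ := Set.mem_iUnion.1 hmem'
      rcases le_or_gt n m with h | h
      · exact absurd hm2 (not_lt.2 (ha.antitone (by omega)))
      · exact absurd hm1 (not_lt.2 (ha.antitone (by omega)))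

/-- Every infinite set of reals is split by some open set. -/
lemma exists_open_splits {A : Set ℝ} (hA : A.Infinite) :
    ∃ U : Set ℝ, IsOpen U ∧ Splits U A := by
  rcases exists_mono_seq_of_infinite hA with ⟨a, ha, hmem⟩ | ⟨a, ha, hmem⟩
  · exact splits_of_strictMono a ha hmem
  · exact splits_of_strictAnti a ha hmem

lemma frontier_isMeagre {U : Set ℝ} (hU : IsOpen U) : IsMeagre (frontier U) := by
  rw [isMeagre_iff_countable_union_isNowhereDense]
  refine ⟨{frontier U}, ?_, Set.countable_singleton _, by simp⟩
  rintro t ht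
  rw [Set.mem_singleton_iff] at ht
  subst ht
  rw [IsNowhereDense, isClosed_frontier.closure_eq, ← frontier_compl]
  exact interior_frontier hU.isClosed_compl

lemma seq_aux (x : ℝ) :
    Function.Injective (fun n : ℕ => x + 1 / (n + 1 : ℝ)) ∧
    Tendsto (fun n : ℕ => x + 1 / (n + 1 : ℝ)) atTop (𝓝 x) := by
  constructor
  · intro m n h
    simp only [add_right_inj] at h
    have hm : ((m : ℝ) + 1) ≠ 0 := by positivity
    have hn : ((n : ℝ) + 1) ≠ 0 := by positivity
    field_simp at h
    have h' : m + 1 = n + 1 := by exact_mod_cast h.symm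
    omega
  · have h := tendsto_one_div_add_atTop_nhds_zero_nat (𝕜 := ℝ)
    have := (tendsto_const_nhds (x := x) (f := atTop (α := ℕ))).add h
    simpa using this

lemma mem_closure_of_infinite_subset_range {x : ℝ} {B : Set ℝ}
    (hB : B.Infinite) (hsub : B ⊆ Set.range (fun n : ℕ => x + 1 / (n + 1 : ℝ))) :
    x ∈ closure B := by
  set f : ℕ → ℝ := fun n : ℕ => x + 1 / (n + 1 : ℝ) with hf
  obtain ⟨hinj, htend⟩ := seq_aux x
  have hI : (f ⁻¹' B).Infinite := by
    intro hfin
    have himg : f '' (f ⁻¹' B) = B := by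
      rw [Set.image_preimage_eq_inter_range, Set.inter_eq_left.2 hsub]
    exact hB (himg ▸ hfin.image f)
  rw [mem_closure_iff_nhds]
  intro N hN
  have hmem : f ⁻¹' N ∈ atTop := htend hN
  rw [mem_atTop_sets] at hmem
  obtain ⟨N₀, hN₀⟩ := hmem
  obtain ⟨n, hnI, hn⟩ := hI.exists_gt N₀
  exact ⟨f n, hN₀ n (le_of_lt hn), hnI⟩

lemma exists_mem_frontier {𝒰 : Set (Set ℝ)} (hU : ∀ U ∈ 𝒰, IsOpen U)
    (hsplit : ∀ A : Set ℝ, A.Infinite → ∃ U ∈ 𝒰, Splits U A) (x : ℝ) :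
    ∃ U ∈ 𝒰, x ∈ frontier U := by
  set f : ℕ → ℝ := fun n : ℕ => x + 1 / (n + 1 : ℝ) with hf
  obtain ⟨hinj, -⟩ := seq_aux x
  have hA : (Set.range f).Infinite := Set.infinite_range_of_injective hinj
  obtain ⟨U, hUmem, h1, h2⟩ := hsplit _ hA
  refine ⟨U, hUmem, ?_, ?_⟩
  · exact closure_mono Set.inter_subset_right
      (mem_closure_of_infinite_subset_range h1 Set.inter_subset_left)
  · rw [(hU U hUmem).interior_eq]
    intro hxU
    have hx : x ∈ closure (Set.range f \ U) :=
      mem_closure_of_infinite_subset_range h2 Set.diff_subset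
    have : x ∈ Uᶜ := by
      have hclosed : IsClosed (Uᶜ) := (hU U hUmem).isClosed_compl
      exact hclosed.closure_subset_iff.2 (Set.diff_subset_compl _ _) hx
    exact this hxU

end Aux

/-- `cov(ℳ) ≤ 𝔰(ℝ)`. -/
theorem stmt9 : covMeager ≤ splittingNumber ℝ := by
  apply le_csInf
  · refine ⟨#{U : Set ℝ | IsOpen U}, {U | IsOpen U}, fun U hU => hU, fun A hA => ?_, rfl⟩
    obtain ⟨U, hUo, hs⟩ := exists_open_splits hA
    exact ⟨U, hUo, hs⟩
  rintro c ⟨𝒰, hopen, hsplit, rfl⟩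
  have cover : ⋃₀ (frontier '' 𝒰) = Set.univ := by
    ext x
    simp only [Set.mem_sUnion, Set.mem_image, Set.mem_univ, iff_true]
    obtain ⟨U, hUmem, hxU⟩ := exists_mem_frontier hopen hsplit x
    exact ⟨frontier U, ⟨U, hUmem, rfl⟩, hxU⟩
  have hmem : #(frontier '' 𝒰) ∈ {c : Cardinal | ∃ 𝒞 : Set (Set ℝ),
      (∀ A ∈ 𝒞, IsMeagre A) ∧ ⋃₀ 𝒞 = Set.univ ∧ c = #𝒞} := by
    refine ⟨frontier '' 𝒰, ?_, cover, rfl⟩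
    rintro A ⟨U, hUmem, rfl⟩
    exact frontier_isMeagre (hopen U hUmem)
  exact le_trans (csInf_le' hmem) Cardinal.mk_image_le
end

section
/- Let x ∈ ℝ and let A ⊆ ℝ be the set of terms of an injective sequence converging to x with x ∉ A. If U ⊆ ℝ is open and U splits A, then x belongs to the topological boundary ∂U of U. Consequently, if 𝒰 is a family of open subsets of ℝ such that every infinite subset of ℝ is split by some member of 𝒰, then ℝ = ⋃_{U ∈ 𝒰} ∂U. -/
open Cardinal Filter

lemma key (x : ℝ) (g : ℕ → ℝ) (A : Set ℝ) (hg : Function.Injective g)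
    (ht : Filter.Tendsto g Filter.atTop (nhds x)) (hA : A = Set.range g)
    (U : Set ℝ) (hs : Splits U A) : x ∈ frontier U := by
  obtain ⟨h1, h2⟩ := hs
  have freq : ∀ S : Set ℝ, (A ∩ S).Infinite → ∃ᶠ n in atTop, g n ∈ S := by
    intro S hS
    have : {n | g n ∈ S}.Infinite := by
      have : (A ∩ S).Infinite := hS
      have hsub : A ∩ S ⊆ g '' {n | g n ∈ S} := by
        rintro y ⟨hyA, hyS⟩
        rw [hA] at hyA
        obtain ⟨n, rfl⟩ := hyA
        exact ⟨n, hyS, rfl⟩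
      have := this.mono hsub
      exact Set.Infinite.of_image _ this
    exact Nat.frequently_atTop_iff_infinite.mpr this
  have hU : x ∈ closure U :=
    mem_closure_of_frequently_of_tendsto (freq U h1) ht
  have hUc : x ∈ closure Uᶜ :=
    mem_closure_of_frequently_of_tendsto (freq Uᶜ h2) ht
  rw [frontier_eq_closure_inter_closure]
  exact ⟨hU, hUc⟩

/-- If `A` is the set of terms of an injective sequence converging to `x ∉ A`, and the open
set `U` splits `A`, then `x ∈ ∂U`. Consequently, if every infinite subset of `ℝ` is split by
a member of the family `𝒰` of open sets, then `ℝ = ⋃_{U ∈ 𝒰} ∂U`. -/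
theorem stmt10 :
    (∀ (x : ℝ) (g : ℕ → ℝ) (A : Set ℝ), Function.Injective g →
      Filter.Tendsto g Filter.atTop (nhds x) → A = Set.range g → x ∉ A →
      ∀ U : Set ℝ, IsOpen U → Splits U A → x ∈ frontier U) ∧
    (∀ 𝒰 : Set (Set ℝ), (∀ U ∈ 𝒰, IsOpen U) →
      (∀ A : Set ℝ, A.Infinite → ∃ U ∈ 𝒰, Splits U A) →
      (⋃ U ∈ 𝒰, frontier U) = Set.univ) := by
  constructor
  · intro x g A hg ht hA _ U _ hs
    exact key x g A hg ht hA U hs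
  · intro 𝒰 hopen hsplit
    ext x
    simp only [Set.mem_iUnion, Set.mem_univ, iff_true]
    set g : ℕ → ℝ := fun n => x + 1 / (n + 1) with hgdef
    have hg : Function.Injective g := by
      intro a b hab
      have : (1 : ℝ) / (a + 1) = 1 / (b + 1) := by
        simpa [hgdef] using hab
      have ha : (0:ℝ) < a + 1 := by positivity
      have hb : (0:ℝ) < b + 1 := by positivity
      field_simp at this
      exact_mod_cast add_right_cancel this.symm
    have ht : Filter.Tendsto g Filter.atTop (nhds x) := by
      have : Filter.Tendsto (fun n : ℕ => 1 / ((n : ℝ) + 1)) atTop (nhds 0) :=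
        tendsto_one_div_add_atTop_nhds_zero_nat
      simpa [hgdef] using tendsto_const_nhds.add this
    have hAinf : (Set.range g).Infinite := Set.infinite_range_of_injective hg
    obtain ⟨U, hU𝒰, hsU⟩ := hsplit (Set.range g) hAinf
    exact ⟨U, hU𝒰, key x g (Set.range g) hg ht rfl U hsU⟩
end

section
/- 𝔟 ≤ 𝔰(ℝ): the bounding number is at most the splitting number of the reals. Equivalently, for every family 𝒰 of open subsets of the Cantor space 2^ω with |𝒰| < 𝔟 there is an infinite X ⊆ 2^ω that is not split by any member of 𝒰. -/
open Cardinal Filter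

/-- `f <* g`: eventual domination. -/
def EvDomLT (f g : ℕ → ℕ) : Prop := ∀ᶠ n in Filter.atTop, f n < g n

/-- The bounding number `𝔟`: the smallest cardinality of a family of functions `ℕ → ℕ`
not eventually dominated by any single function. -/
noncomputable def boundingNumber : Cardinal :=
  sInf {c : Cardinal | ∃ B : Set (ℕ → ℕ),
    (¬ ∃ g : ℕ → ℕ, ∀ f ∈ B, EvDomLT f g) ∧ c = #B}

/-! ### Cylinder lemmas -/

lemma cyl_subset_of_open {U : Set (ℕ → Bool)} (hU : IsOpen U) {y : ℕ → Bool} (hy : y ∈ U) :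
    ∃ l : ℕ, ∀ z : ℕ → Bool, (∀ i < l, z i = y i) → z ∈ U := by
  rw [isOpen_pi_iff] at hU
  obtain ⟨I, u, hI, hsub⟩ := hU y hy
  refine ⟨(I.sup id) + 1, fun z hz => hsub ?_⟩
  intro i hi
  rw [hz i (Nat.lt_succ_of_le (Finset.le_sup (f := id) hi))]
  exact (hI i hi).2

open Classical in
noncomputable def cylLen (U : Set (ℕ → Bool)) (y : ℕ → Bool) : ℕ :=
  if h : ∃ l : ℕ, ∀ z : ℕ → Bool, (∀ i < l, z i = y i) → z ∈ U then h.choose else 0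

lemma cylLen_spec {U : Set (ℕ → Bool)} (hU : IsOpen U) {y : ℕ → Bool} (hy : y ∈ U) :
    ∀ z : ℕ → Bool, (∀ i < cylLen U y, z i = y i) → z ∈ U := by
  have h := cyl_subset_of_open hU hy
  simpa only [cylLen, dif_pos h] using h.choose_spec

def extendFin (m : ℕ) (s : Fin m → Bool) : ℕ → Bool :=
  fun i => if h : i < m then s ⟨i, h⟩ else false

noncomputable def fU (U : Set (ℕ → Bool)) (m : ℕ) : ℕ :=
  Finset.univ.sup (fun s : Fin m → Bool => cylLen U (extendFin m s))

lemma fU_spec {U : Set (ℕ → Bool)} (hU : IsOpen U) {m : ℕ} {y : ℕ → Bool} (hy : y ∈ U)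
    (hsupp : ∀ i, m ≤ i → y i = false) :
    ∀ z : ℕ → Bool, (∀ i < fU U m, z i = y i) → z ∈ U := by
  have hyext : y = extendFin m (fun i : Fin m => y i) := by
    funext i
    by_cases h : i < m
    · simp [extendFin, h]
    · simp [extendFin, h, hsupp i (le_of_not_gt h)]
  have hle : cylLen U y ≤ fU U m := by
    unfold fU
    conv_lhs => rw [hyext]
    exact Finset.le_sup (f := fun s : Fin m → Bool => cylLen U (extendFin m s))
      (Finset.mem_univ _)
  intro z hz
  exact cylLen_spec hU hy z (fun i hi => hz i (lt_of_lt_of_le hi hle))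

/-! ### Getting a dominating function -/

lemma exists_bound {B : Set (ℕ → ℕ)} (hB : #B < boundingNumber) :
    ∃ g : ℕ → ℕ, ∀ f ∈ B, EvDomLT f g := by
  by_contra h
  have h2 : boundingNumber ≤ #B := by
    rw [boundingNumber]
    exact csInf_le' ⟨B, h, rfl⟩
  exact absurd h2 (not_le_of_gt hB)

/-! ### The sequence of positions -/

noncomputable def seqN (g : ℕ → ℕ) : ℕ → ℕ
  | 0 => 0
  | k + 1 => max (seqN g k) (g (seqN g k + 1)) + 1

lemma seqN_strictMono (g : ℕ → ℕ) : StrictMono (seqN g) :=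
  strictMono_nat_of_lt_succ fun k =>
    Nat.lt_succ_of_le (le_max_left _ _)

lemma seqN_gt (g : ℕ → ℕ) (k : ℕ) : g (seqN g k + 1) < seqN g (k + 1) :=
  Nat.lt_succ_of_le (le_max_right _ _)

/-! ### The main lemma on Cantor space -/

lemma cantor_unsplit (𝒰 : Set (Set (ℕ → Bool))) (hop : ∀ U ∈ 𝒰, IsOpen U)
    (hcard : #𝒰 < boundingNumber) :
    ∃ A : Set (ℕ → Bool), A.Infinite ∧ ∀ U ∈ 𝒰, ¬ Splits U A := by
  classical
  obtain ⟨g, hg⟩ : ∃ g, ∀ f ∈ (fun U => fU U) '' 𝒰, EvDomLT f g :=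
    exists_bound (lt_of_le_of_lt Cardinal.mk_image_le hcard)
  set x : ℕ → Bool := fun i => decide (∃ k, seqN g k = i) with hx
  set b : ℕ → ℕ → Bool := fun k i => decide (∃ j, j ≤ k ∧ seqN g j = i) with hb
  have hmono := seqN_strictMono g
  -- agreement of x and b k below seqN g (k+1)
  have hagree : ∀ k i, i < seqN g (k + 1) → x i = b k i := by
    intro k i hi
    simp only [hx, hb, decide_eq_decide]
    constructor
    · rintro ⟨j, rfl⟩
      exact ⟨j, Nat.lt_succ_iff.mp (hmono.lt_iff_lt.mp hi), rfl⟩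
    · rintro ⟨j, _, rfl⟩
      exact ⟨j, rfl⟩
  -- support of b k
  have hsupp : ∀ k i, seqN g k + 1 ≤ i → b k i = false := by
    intro k i hi
    simp only [hb, decide_eq_false_iff_not]
    rintro ⟨j, hj, rfl⟩
    exact absurd (hmono.monotone hj) (by omega)
  -- b is injective
  have hbinj : Function.Injective b := by
    intro k k' hkk'
    by_contra hne
    rcases Nat.lt_or_ge k k' with h | h
    · have h1 : b k' (seqN g k') = true := by
        simp only [hb, decide_eq_true_eq]; exact ⟨k', le_refl _, rfl⟩
      have h2 : b k (seqN g k') = false := by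
        simp only [hb, decide_eq_false_iff_not]
        rintro ⟨j, hj, hj'⟩
        have := hmono.injective hj'
        omega
      rw [hkk', h1] at h2; simp at h2
    · rcases Nat.lt_or_ge k' k with h' | h'
      · have h1 : b k (seqN g k) = true := by
          simp only [hb, decide_eq_true_eq]; exact ⟨k, le_refl _, rfl⟩
        have h2 : b k' (seqN g k) = false := by
          simp only [hb, decide_eq_false_iff_not]
          rintro ⟨j, hj, hj'⟩
          have := hmono.injective hj'
          omega
        rw [← hkk', h1] at h2; simp at h2
      · omega
  refine ⟨Set.range b, Set.infinite_range_of_injective hbinj, ?_⟩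
  intro U hU
  have hUopen := hop U hU
  have hgU : EvDomLT (fU U) g := hg _ ⟨U, hU, rfl⟩
  obtain ⟨N, hN⟩ := eventually_atTop.mp hgU
  by_cases hxU : x ∈ U
  · -- A \ U is finite
    obtain ⟨l, hl⟩ := cyl_subset_of_open hUopen hxU
    have hmem : ∀ k, l ≤ k → b k ∈ U := by
      intro k hk
      apply hl
      intro i hi
      have hlk : l ≤ seqN g (k + 1) :=
        le_trans (show l ≤ k + 1 by omega) hmono.le_apply
      have : i < seqN g (k + 1) := lt_of_lt_of_le hi hlk
      exact (hagree k i this).symm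
    rintro ⟨-, hinf⟩
    apply hinf
    apply Set.Finite.subset ((Set.finite_Iio l).image b)
    rintro a ⟨⟨k, rfl⟩, haU⟩
    refine ⟨k, Set.mem_Iio.mpr ?_, rfl⟩
    by_contra h
    exact haU (hmem k (by omega))
  · -- A ∩ U is finite
    have hmem : ∀ k, N ≤ k → b k ∉ U := by
      intro k hk hbk
      apply hxU
      have hm : N ≤ seqN g k + 1 :=
        le_trans hk (le_trans hmono.le_apply (Nat.le_succ _))
      have h1 : fU U (seqN g k + 1) < g (seqN g k + 1) := hN _ hm
      apply fU_spec hUopen hbk (hsupp k) x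
      intro i hi
      apply hagree
      calc i < fU U (seqN g k + 1) := hi
        _ < g (seqN g k + 1) := h1
        _ < seqN g (k + 1) := seqN_gt g k
    rintro ⟨hinf, -⟩
    apply hinf
    apply Set.Finite.subset ((Set.finite_Iio N).image b)
    rintro a ⟨⟨k, rfl⟩, haU⟩
    refine ⟨k, Set.mem_Iio.mpr ?_, rfl⟩
    by_contra h
    exact hmem k (by omega) haU

/-! ### A continuous injection of Cantor space into ℝ -/

noncomputable def cb (v : Bool) : ℝ := if v then 1 else 0

lemma cb_nonneg (v : Bool) : 0 ≤ cb v := by unfold cb; split <;> norm_num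

lemma cb_le_one (v : Bool) : cb v ≤ 1 := by unfold cb; split <;> norm_num

noncomputable def embC (x : ℕ → Bool) : ℝ := ∑' n, cb (x n) * (1/3 : ℝ) ^ n

lemma summable_embC (x : ℕ → Bool) : Summable (fun n => cb (x n) * (1/3 : ℝ) ^ n) := by
  apply Summable.of_nonneg_of_le
    (fun n => mul_nonneg (cb_nonneg _) (by positivity))
    (fun n => ?_)
    (summable_geometric_of_lt_one (by norm_num) (by norm_num : (1/3 : ℝ) < 1))
  calc cb (x n) * (1/3 : ℝ) ^ n ≤ 1 * (1/3 : ℝ) ^ n := by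
        apply mul_le_mul_of_nonneg_right (cb_le_one _) (by positivity)
    _ = (1/3 : ℝ) ^ n := one_mul _

lemma continuous_embC : Continuous embC := by
  unfold embC
  refine continuous_tsum (f := fun n (x : ℕ → Bool) => cb (x n) * (1/3 : ℝ) ^ n)
    (u := fun n => (1/3 : ℝ) ^ n) ?_ ?_ ?_
  · intro n
    have hc : Continuous fun b : Bool => cb b * (1/3 : ℝ) ^ n :=
      continuous_of_discreteTopology
    exact hc.comp (continuous_apply n)
  · exact summable_geometric_of_lt_one (by norm_num) (by norm_num)
  · intro n x
    rw [Real.norm_eq_abs, abs_of_nonneg (mul_nonneg (cb_nonneg _) (by positivity))]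
    calc cb (x n) * (1/3 : ℝ) ^ n ≤ 1 * (1/3 : ℝ) ^ n := by
          apply mul_le_mul_of_nonneg_right (cb_le_one _) (by positivity)
      _ = (1/3 : ℝ) ^ n := one_mul _

lemma embC_lt {x y : ℕ → Bool} {n : ℕ} (hagree : ∀ i < n, x i = y i)
    (hx : x n = true) (hy : y n = false) : embC y < embC x := by
  have sx := summable_embC x
  have sy := summable_embC y
  have hdx : embC x = (∑ i ∈ Finset.range (n+1), cb (x i) * (1/3 : ℝ) ^ i)
      + ∑' i, cb (x (i + (n+1))) * (1/3 : ℝ) ^ (i + (n+1)) := (Summable.sum_add_tsum_nat_add (n+1) sx).symm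
  have hdy : embC y = (∑ i ∈ Finset.range (n+1), cb (y i) * (1/3 : ℝ) ^ i)
      + ∑' i, cb (y (i + (n+1))) * (1/3 : ℝ) ^ (i + (n+1)) := (Summable.sum_add_tsum_nat_add (n+1) sy).symm
  have hgeo : Summable (fun i => (1/3 : ℝ) ^ (i + (n+1))) := by
    apply Summable.comp_injective
      (summable_geometric_of_lt_one (by norm_num) (by norm_num : (1/3:ℝ) < 1))
    exact fun a b hab => by omega
  -- tail bounds
  have htail_x : (0:ℝ) ≤ ∑' i, cb (x (i + (n+1))) * (1/3 : ℝ) ^ (i + (n+1)) :=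
    tsum_nonneg (fun i => mul_nonneg (cb_nonneg _) (by positivity))
  have htail_y : ∑' i, cb (y (i + (n+1))) * (1/3 : ℝ) ^ (i + (n+1))
      ≤ ∑' i, (1/3 : ℝ) ^ (i + (n+1)) := by
    apply Summable.tsum_le_tsum _ (sy.comp_injective (fun a b hab => by omega)) hgeo
    intro i
    calc cb (y (i + (n+1))) * (1/3 : ℝ) ^ (i + (n+1))
        ≤ 1 * (1/3 : ℝ) ^ (i + (n+1)) := by
          apply mul_le_mul_of_nonneg_right (cb_le_one _) (by positivity)
      _ = (1/3 : ℝ) ^ (i + (n+1)) := one_mul _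
  have hgeoval : ∑' i, (1/3 : ℝ) ^ (i + (n+1)) < (1/3 : ℝ) ^ n := by
    have : (fun i => (1/3 : ℝ) ^ (i + (n+1))) = fun i => (1/3 : ℝ) ^ (n+1) * (1/3 : ℝ) ^ i := by
      funext i; rw [← pow_add]; ring_nf
    rw [this, tsum_mul_left, tsum_geometric_of_lt_one (by norm_num) (by norm_num)]
    have h3 : (1/3 : ℝ) ^ (n+1) = (1/3 : ℝ) ^ n * (1/3) := pow_succ _ _
    rw [h3]
    have hpos : (0:ℝ) < (1/3 : ℝ) ^ n := by positivity
    nlinarith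
  -- partial sums agree below n, and differ by (1/3)^n at n
  have hpart : ∑ i ∈ Finset.range (n+1), cb (y i) * (1/3 : ℝ) ^ i + (1/3 : ℝ) ^ n
      = ∑ i ∈ Finset.range (n+1), cb (x i) * (1/3 : ℝ) ^ i := by
    rw [Finset.sum_range_succ, Finset.sum_range_succ, hx, hy]
    have : ∑ i ∈ Finset.range n, cb (y i) * (1/3 : ℝ) ^ i
        = ∑ i ∈ Finset.range n, cb (x i) * (1/3 : ℝ) ^ i := by
      apply Finset.sum_congr rfl
      intro i hi
      rw [hagree i (Finset.mem_range.mp hi)]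
    rw [this]
    simp [cb]
  rw [hdx, hdy]
  have := lt_of_le_of_lt htail_y hgeoval
  linarith

lemma embC_injective : Function.Injective embC := by
  intro x y hxy
  by_contra hne
  have hex : ∃ n, x n ≠ y n := by
    by_contra h
    push_neg at h
    exact hne (funext h)
  classical
  let n := Nat.find hex
  have hn : x n ≠ y n := Nat.find_spec hex
  have hagree : ∀ i < n, x i = y i := fun i hi => by
    have := Nat.find_min hex hi
    simpa using this
  cases hxn : x n <;> cases hyn : y n
  · exact hn (hxn.trans hyn.symm)
  · have := embC_lt (x := y) (y := x) (fun i hi => (hagree i hi).symm) hyn hxn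
    rw [hxy] at this
    exact lt_irrefl _ this
  · have := embC_lt hagree hxn hyn
    rw [hxy] at this
    exact lt_irrefl _ this
  · exact hn (hxn.trans hyn.symm)

/-! ### Every infinite subset of ℝ is split by an open set -/

lemma split_of_strictMono {A : Set ℝ} {c : ℕ → ℝ} (hc : StrictMono c) (hmem : ∀ n, c n ∈ A) :
    ∃ U : Set ℝ, IsOpen U ∧ Splits U A := by
  refine ⟨⋃ k, Set.Ioo (c (3*k)) (c (3*k+2)), isOpen_iUnion (fun k => isOpen_Ioo), ?_, ?_⟩
  · apply Set.infinite_of_injective_forall_mem (f := fun k : ℕ => c (3*k+1))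
    · intro a b hab
      have := hc.injective hab
      omega
    · intro k
      refine ⟨hmem _, Set.mem_iUnion.mpr ⟨k, ?_⟩⟩
      exact ⟨hc (by omega), hc (by omega)⟩
  · apply Set.infinite_of_injective_forall_mem (f := fun k : ℕ => c (3*k))
    · intro a b hab
      have := hc.injective hab
      omega
    · intro k
      refine ⟨hmem _, ?_⟩
      intro hmemU
      obtain ⟨m, hm1, hm2⟩ := Set.mem_iUnion.mp hmemU
      rw [hc.lt_iff_lt] at hm1 hm2
      omega

lemma split_of_strictAnti {A : Set ℝ} {c : ℕ → ℝ} (hc : StrictAnti c) (hmem : ∀ n, c n ∈ A) :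
    ∃ U : Set ℝ, IsOpen U ∧ Splits U A := by
  refine ⟨⋃ k, Set.Ioo (c (3*k+2)) (c (3*k)), isOpen_iUnion (fun k => isOpen_Ioo), ?_, ?_⟩
  · apply Set.infinite_of_injective_forall_mem (f := fun k : ℕ => c (3*k+1))
    · intro a b hab
      have := hc.injective hab
      omega
    · intro k
      refine ⟨hmem _, Set.mem_iUnion.mpr ⟨k, ?_⟩⟩
      exact ⟨hc (by omega), hc (by omega)⟩
  · apply Set.infinite_of_injective_forall_mem (f := fun k : ℕ => c (3*k))
    · intro a b hab
      have := hc.injective hab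
      omega
    · intro k
      refine ⟨hmem _, ?_⟩
      intro hmemU
      obtain ⟨m, hm1, hm2⟩ := Set.mem_iUnion.mp hmemU
      rw [hc.lt_iff_gt] at hm1 hm2
      omega

lemma exists_split_real (A : Set ℝ) (hA : A.Infinite) : ∃ U : Set ℝ, IsOpen U ∧ Splits U A := by
  classical
  by_cases hWF : A.IsWF
  · -- extract a strictly increasing sequence
    set a : ℕ → ℝ := fun n => (hA.natEmbedding A n : ℝ) with ha
    have hainj : Function.Injective a := fun m n hmn => by
      have := (hA.natEmbedding A).injective (Subtype.ext hmn)
      exact this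
    have hamem : ∀ n, a n ∈ A := fun n => (hA.natEmbedding A n).2
    obtain ⟨φ, hφ⟩ := hWF.isPWO.exists_monotone_subseq hamem
    have hstrict : StrictMono (a ∘ φ) :=
      hφ.strictMono_of_injective (hainj.comp φ.injective)
    exact split_of_strictMono hstrict (fun n => hamem _)
  · rw [Set.isWF_iff_no_descending_seq] at hWF
    push_neg at hWF
    obtain ⟨f, hf, hfmem⟩ := hWF
    exact split_of_strictAnti hf (fun n => hfmem n)

/-! ### The theorem -/

/-- `𝔟 ≤ 𝔰(ℝ)`; equivalently, any family of fewer than `𝔟` open subsets of the Cantor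
space fails to split some infinite set. -/
theorem stmt11 :
    boundingNumber ≤ splittingNumber ℝ ∧
    ∀ 𝒰 : Set (Set (ℕ → Bool)), (∀ U ∈ 𝒰, IsOpen U) → #𝒰 < boundingNumber →
      ∃ A : Set (ℕ → Bool), A.Infinite ∧ ∀ U ∈ 𝒰, ¬ Splits U A := by
  constructor
  · rw [splittingNumber]
    apply le_csInf
    · refine ⟨#{U : Set ℝ | IsOpen U}, {U : Set ℝ | IsOpen U}, fun U hU => hU, ?_, rfl⟩
      intro A hA
      obtain ⟨U, hUo, hUsp⟩ := exists_split_real A hA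
      exact ⟨U, hUo, hUsp⟩
    · rintro c ⟨𝒰, hop, hsplit, rfl⟩
      by_contra hlt
      push_neg at hlt
      -- pull back the family along embC
      set 𝒱 : Set (Set (ℕ → Bool)) := (fun U => embC ⁻¹' U) '' 𝒰 with h𝒱
      have h𝒱op : ∀ V ∈ 𝒱, IsOpen V := by
        rintro V ⟨U, hU, rfl⟩
        exact (hop U hU).preimage continuous_embC
      have h𝒱card : #𝒱 < boundingNumber := lt_of_le_of_lt Cardinal.mk_image_le hlt
      obtain ⟨A, hAinf, hAun⟩ := cantor_unsplit 𝒱 h𝒱op h𝒱card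
      obtain ⟨U, hU, hUsp⟩ := hsplit (embC '' A) (hAinf.image (embC_injective.injOn))
      apply hAun (embC ⁻¹' U) ⟨U, hU, rfl⟩
      have h1 : embC '' A ∩ U = embC '' (A ∩ embC ⁻¹' U) := by
        ext y
        constructor
        · rintro ⟨⟨u, hu, rfl⟩, hyU⟩
          exact ⟨u, ⟨hu, hyU⟩, rfl⟩
        · rintro ⟨u, ⟨hu, huU⟩, rfl⟩
          exact ⟨⟨u, hu, rfl⟩, huU⟩
      have h2 : embC '' A \ U = embC '' (A \ embC ⁻¹' U) := by
        ext y
        constructor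
        · rintro ⟨⟨u, hu, rfl⟩, hyU⟩
          exact ⟨u, ⟨hu, hyU⟩, rfl⟩
        · rintro ⟨u, ⟨hu, huU⟩, rfl⟩
          exact ⟨⟨u, hu, rfl⟩, huU⟩
      obtain ⟨hs1, hs2⟩ := hUsp
      rw [h1] at hs1
      rw [h2] at hs2
      exact ⟨hs1.of_image, hs2.of_image⟩
  · exact cantor_unsplit
end

section
/- non(𝒩) equals the smallest cardinality of a subset of the Cantor space 2^ω having outer measure 1 with respect to the uniform (coin-flipping) product measure. -/
open Cardinal Filter MeasureTheory

/-- `μ` is the uniform (coin-flipping) product probability measure on the Cantor space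
`2^ω`: every basic cylinder determined by `n` coordinates has measure `(1/2)^n`. -/
def IsCantorMeasure (μ : Measure (ℕ → Bool)) : Prop :=
  ∀ (n : ℕ) (s : Fin n → Bool), μ {x | ∀ i : Fin n, x i = s i} = (1 / 2 : ENNReal) ^ n

open Set

namespace Stmt12A

abbrev G := ℕ → Bool

def τ (g x : G) : G := fun i => xor (g i) (x i)

lemma τ_comm (g x : G) : τ g x = τ x g := by
  funext i; exact Bool.xor_comm _ _

lemma τ_τ (g : G) (x : G) : τ g (τ g x) = x := by
  funext i; simp [τ]

lemma τ_injective (g : G) : Function.Injective (τ g) :=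
  Function.LeftInverse.injective (g := τ g) (τ_τ g)

lemma τ_preimage_preimage (g : G) (A : Set G) : τ g ⁻¹' (τ g ⁻¹' A) = A := by
  ext x; simp [τ_τ]

lemma measurable_τ2 : Measurable fun p : G × G => τ p.1 p.2 := by
  apply measurable_pi_lambda
  intro i
  have h1 : Measurable fun p : G × G => (p.1 i, p.2 i) := by fun_prop
  exact (measurable_of_countable (fun q : Bool × Bool => xor q.1 q.2)).comp h1

lemma measurable_τ (g : G) : Measurable (τ g) :=
  measurable_τ2.comp (measurable_const.prodMk measurable_id)

def cyl (n : ℕ) (s : Fin n → Bool) : Set G := {x | ∀ i : Fin n, x i = s i}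

def cyls : Set (Set G) := {A | ∃ n s, A = cyl n s}

lemma measurableSet_cyl (n : ℕ) (s : Fin n → Bool) : MeasurableSet (cyl n s) := by
  have : cyl n s = ⋂ i : Fin n, (fun x : G => x i) ⁻¹' {s i} := by
    ext x; simp [cyl]
  rw [this]
  exact MeasurableSet.iInter fun i => (measurable_pi_apply _) (measurableSet_singleton _)

lemma cyl_inter_of_le {n m : ℕ} (h : n ≤ m) (s : Fin n → Bool) (t : Fin m → Bool)
    (hne : (cyl n s ∩ cyl m t).Nonempty) : cyl n s ∩ cyl m t = cyl m t := by
  obtain ⟨x, hxs, hxt⟩ := hne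
  refine inter_eq_self_of_subset_right fun y hy i => ?_
  have hi : (i : ℕ) < m := lt_of_lt_of_le i.2 h
  have h1 : y i = t ⟨i, hi⟩ := hy ⟨i, hi⟩
  have h2 : x i = t ⟨i, hi⟩ := hxt ⟨i, hi⟩
  rw [h1, ← h2]; exact hxs i

lemma isPiSystem_cyls : IsPiSystem cyls := by
  rintro A ⟨n, s, rfl⟩ B ⟨m, t, rfl⟩ hne
  rcases le_total n m with h | h
  · rw [cyl_inter_of_le h s t hne]; exact ⟨m, t, rfl⟩
  · rw [inter_comm] at hne ⊢
    rw [cyl_inter_of_le h t s hne]; exact ⟨n, s, rfl⟩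

lemma generateFrom_cyls : (inferInstance : MeasurableSpace G) = MeasurableSpace.generateFrom cyls := by
  refine le_antisymm ?_ ?_
  · show MeasurableSpace.pi ≤ _
    refine iSup_le fun i => ?_
    rintro A ⟨t, -, rfl⟩
    have hb : ∀ b : Bool, MeasurableSet[MeasurableSpace.generateFrom cyls] {x : G | x i = b} := by
      intro b
      have : {x : G | x i = b} =
          ⋃ (s : Fin (i + 1) → Bool) (_ : s ⟨i, Nat.lt_succ_self i⟩ = b), cyl (i + 1) s := by
        ext x
        simp only [mem_setOf_eq, mem_iUnion, cyl]
        constructor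
        · intro hx
          exact ⟨fun j => x j, hx, fun j => rfl⟩
        · rintro ⟨s, hs, hmem⟩
          rw [← hs]
          exact hmem ⟨i, Nat.lt_succ_self i⟩
      rw [this]
      exact MeasurableSet.iUnion fun s => MeasurableSet.iUnion fun _ =>
        MeasurableSpace.measurableSet_generateFrom ⟨i + 1, s, rfl⟩
    have : (fun x : G => x i) ⁻¹' t = ⋃ (b : Bool) (_ : b ∈ t), {x : G | x i = b} := by
      ext x; simp
    rw [this]
    exact MeasurableSet.iUnion fun b => MeasurableSet.iUnion fun _ => hb b
  · rw [MeasurableSpace.generateFrom_le_iff]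
    rintro A ⟨n, s, rfl⟩
    exact measurableSet_cyl n s


section Measure

variable (μ : Measure G)

def CylMeasure : Prop := ∀ (n : ℕ) (s : Fin n → Bool), μ (cyl n s) = (1 / 2 : ENNReal) ^ n

variable {μ}

lemma CylMeasure.univ (hμ : CylMeasure μ) : μ univ = 1 := by
  have := hμ 0 (fun i => i.elim0)
  simpa [cyl] using this

lemma CylMeasure.prob (hμ : CylMeasure μ) : IsProbabilityMeasure μ := ⟨hμ.univ⟩

lemma CylMeasure.map_τ (hμ : CylMeasure μ) (g : G) : μ.map (τ g) = μ := by
  haveI := hμ.prob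
  haveI : IsProbabilityMeasure (μ.map (τ g)) :=
    Measure.isProbabilityMeasure_map (measurable_τ g).aemeasurable
  refine ext_of_generate_finite cyls generateFrom_cyls isPiSystem_cyls ?_ ?_
  · rintro A ⟨n, s, rfl⟩
    rw [Measure.map_apply (measurable_τ g) (measurableSet_cyl n s)]
    have : τ g ⁻¹' cyl n s = cyl n (fun i => xor (g i) (s i)) := by
      have key : ∀ a b c : Bool, (xor a b = c) ↔ (b = xor a c) := by decide
      ext x
      simp only [cyl, mem_preimage, mem_setOf_eq, τ]
      exact forall_congr' fun i => key _ _ _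
    rw [this, hμ _ _, hμ n s]
  · rw [Measure.map_apply (measurable_τ g) MeasurableSet.univ]
    simp

lemma CylMeasure.inv (hμ : CylMeasure μ) (g : G) {A : Set G} (hA : MeasurableSet A) :
    μ (τ g ⁻¹' A) = μ A := by
  conv_rhs => rw [← hμ.map_τ g]
  rw [Measure.map_apply (measurable_τ g) hA]

lemma CylMeasure.noAtoms (hμ : CylMeasure μ) : NoAtoms μ := by
  constructor
  intro x
  have hle : ∀ n : ℕ, μ {x} ≤ (1 / 2 : ENNReal) ^ n := fun n => by
    rw [← hμ n (fun i => x i)]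
    exact measure_mono (by intro y hy i; rw [mem_singleton_iff.mp hy])
  have htend : Tendsto (fun n : ℕ => (1 / 2 : ENNReal) ^ n) atTop (nhds 0) :=
    ENNReal.tendsto_pow_atTop_nhds_zero_of_lt_one (by norm_num)
  exact le_antisymm (ge_of_tendsto' htend hle) zero_le

lemma exists_translate [IsProbabilityMeasure μ] {H K : Set G}
    (hH : MeasurableSet H) (hK : MeasurableSet K)
    (invH : ∀ x : G, μ (τ x ⁻¹' H) = μ H)
    (h1 : μ H ≠ 0) (h2 : μ K ≠ 0) :
    ∃ g : G, μ (τ g ⁻¹' H ∩ K) ≠ 0 := by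
  by_contra hcon
  push_neg at hcon
  set S : Set (G × G) := {p : G × G | p.2 ∈ K ∧ τ p.1 p.2 ∈ H} with hS_def
  have hS : MeasurableSet S :=
    (hK.preimage measurable_snd).inter (hH.preimage measurable_τ2)
  have hA1 : (μ.prod μ) S = 0 := by
    rw [Measure.prod_apply hS]
    have : ∀ g : G, μ (Prod.mk g ⁻¹' S) = 0 := by
      intro g
      have : Prod.mk g ⁻¹' S = τ g ⁻¹' H ∩ K := by
        ext x; simp [hS_def, and_comm]
      rw [this]; exact hcon g
    simp only [this, lintegral_const, zero_mul]
  have hA2 : (μ.prod μ) S = μ H * μ K := by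
    rw [Measure.prod_apply_symm hS]
    have hslice : ∀ x : G, μ ((fun g => (g, x)) ⁻¹' S) = K.indicator (fun _ => μ H) x := by
      intro x
      by_cases hx : x ∈ K
      · have : (fun g => (g, x)) ⁻¹' S = τ x ⁻¹' H := by
          ext g
          simp only [hS_def, mem_preimage, mem_setOf_eq, hx, true_and]
          rw [τ_comm]
        rw [this, invH x, indicator_of_mem hx]
      · have : (fun g => (g, x)) ⁻¹' S = ∅ := by
          ext g; simp [hS_def, hx]
        rw [this, indicator_of_notMem hx]
        simp
    calc ∫⁻ x, μ ((fun g => (g, x)) ⁻¹' S) ∂μ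
        = ∫⁻ x, K.indicator (fun _ => μ H) x ∂μ := by
          exact lintegral_congr hslice
      _ = μ H * μ K := by
          rw [lintegral_indicator hK, setLIntegral_const]
  rw [hA1] at hA2
  exact (mul_ne_zero h1 h2) hA2.symm

open scoped Classical in
noncomputable def pick (μ : Measure G) (H K : Set G) : G :=
  if h : ∃ g : G, (⨆ g' : G, μ (τ g' ⁻¹' H ∩ K)) ≤ 2 * μ (τ g ⁻¹' H ∩ K) then h.choose
  else fun _ => false

lemma pick_spec [IsFiniteMeasure μ] (H K : Set G) :
    (⨆ g' : G, μ (τ g' ⁻¹' H ∩ K)) ≤ 2 * μ (τ (pick μ H K) ⁻¹' H ∩ K) := by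
  have hex : ∃ g : G, (⨆ g' : G, μ (τ g' ⁻¹' H ∩ K)) ≤ 2 * μ (τ g ⁻¹' H ∩ K) := by
    set s := ⨆ g' : G, μ (τ g' ⁻¹' H ∩ K) with hs
    rcases eq_or_ne s 0 with h0 | h0
    · exact ⟨fun _ => false, by rw [h0]; exact zero_le⟩
    · have htop : s ≠ ⊤ := by
        refine ne_top_of_le_ne_top (measure_ne_top μ univ) (iSup_le fun g => ?_)
        exact measure_mono (subset_univ _)
      have hlt : s / 2 < s := ENNReal.half_lt_self h0 htop
      obtain ⟨g, hg⟩ := lt_iSup_iff.mp hlt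
      refine ⟨g, ?_⟩
      calc s = s / 2 + s / 2 := (ENNReal.add_halves s).symm
        _ ≤ μ (τ g ⁻¹' H ∩ K) + μ (τ g ⁻¹' H ∩ K) := add_le_add hg.le hg.le
        _ = 2 * μ (τ g ⁻¹' H ∩ K) := (two_mul _).symm
  classical
  rw [pick, dif_pos hex]
  exact hex.choose_spec

noncomputable def gs (μ : Measure G) (H : Set G) : ℕ → G
  | n => pick μ H (⋃ (k : ℕ) (_ : k < n), τ (gs μ H k) ⁻¹' H)ᶜ

lemma mu_iUnion_gs [IsProbabilityMeasure μ] {H : Set G}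
    (inv : ∀ (g : G) {A : Set G}, MeasurableSet A → μ (τ g ⁻¹' A) = μ A)
    (hH : MeasurableSet H) (h0 : μ H ≠ 0) :
    μ (⋃ n, τ (gs μ H n) ⁻¹' H) = 1 := by
  set B : ℕ → Set G := fun n => τ (gs μ H n) ⁻¹' H with hB
  have hBmeas : ∀ n, MeasurableSet (B n) := fun n => hH.preimage (measurable_τ _)
  set U : Set G := ⋃ n, B n with hU_def
  have hU : MeasurableSet U := MeasurableSet.iUnion hBmeas
  set Un : ℕ → Set G := fun n => ⋃ (k : ℕ) (_ : k < n), B k with hUn_def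
  have hUnmeas : ∀ n, MeasurableSet (Un n) :=
    fun n => MeasurableSet.iUnion fun k => MeasurableSet.iUnion fun _ => hBmeas k
  have hgs : ∀ n, gs μ H n = pick μ H (Un n)ᶜ := by
    intro n
    rw [gs]
  rw [← prob_compl_eq_zero_iff hU]
  by_contra hc
  obtain ⟨g, hg⟩ := exists_translate hH hU.compl (fun x => inv x hH) h0 hc
  set c := μ (τ g ⁻¹' H ∩ Uᶜ) with hc_def
  set A : ℕ → Set G := fun n => B n ∩ (Un n)ᶜ with hA_def
  have hAmeas : ∀ n, MeasurableSet (A n) := fun n => (hBmeas n).inter (hUnmeas n).compl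
  have hUnsub : ∀ n, Un n ⊆ U := fun n =>
    iUnion_subset fun k => iUnion_subset fun _ => subset_iUnion B k
  have key : ∀ n, c ≤ 2 * μ (A n) := by
    intro n
    have h1 : c ≤ μ (τ g ⁻¹' H ∩ (Un n)ᶜ) :=
      measure_mono (inter_subset_inter_right _ (compl_subset_compl.mpr (hUnsub n)))
    have h2 : μ (τ g ⁻¹' H ∩ (Un n)ᶜ) ≤ ⨆ g' : G, μ (τ g' ⁻¹' H ∩ (Un n)ᶜ) :=
      le_iSup (fun g' => μ (τ g' ⁻¹' H ∩ (Un n)ᶜ)) g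
    have h3 := pick_spec (μ := μ) H (Un n)ᶜ
    have h4 : A n = τ (pick μ H (Un n)ᶜ) ⁻¹' H ∩ (Un n)ᶜ := by
      rw [hA_def]; simp only [hB, hgs n]
    rw [h4]
    exact (h1.trans h2).trans h3
  have hdisj : Pairwise (Function.onFun Disjoint A) := by
    have aux : ∀ i j, i < j → Disjoint (A i) (A j) := by
      intro i j hij
      refine Set.disjoint_left.mpr fun x hxi hxj => ?_
      have h1 : x ∈ Un j := mem_iUnion.mpr ⟨i, mem_iUnion.mpr ⟨hij, hxi.1⟩⟩
      exact hxj.2 h1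
    intro i j hij
    rcases lt_or_gt_of_ne hij with h | h
    · exact aux i j h
    · exact (aux j i h).symm
  have hsum : (∑' n, μ (A n)) = μ (⋃ n, A n) := (measure_iUnion hdisj hAmeas).symm
  have hhalf : c / 2 ≠ 0 := by
    simp only [ne_eq, ENNReal.div_eq_zero_iff]
    push_neg
    exact ⟨hg, by norm_num⟩
  have hbig : (∑' _ : ℕ, c / 2) = ⊤ := ENNReal.tsum_const_eq_top_of_ne_zero hhalf
  have hle : (∑' _ : ℕ, c / 2) ≤ ∑' n, μ (A n) := by
    refine ENNReal.tsum_le_tsum fun n => ?_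
    rw [ENNReal.div_le_iff (by norm_num) (by norm_num)]
    rw [mul_comm]
    exact key n
  have : (⊤ : ENNReal) ≤ μ (⋃ n, A n) := by
    rw [← hbig, ← hsum]
    exact hle
  exact absurd (this.trans (measure_mono (subset_univ _))) (by simp)

end Measure

end Stmt12A

open Stmt12A in
/-- `non(𝒩)` equals the smallest cardinality of a subset of the Cantor space having outer
measure `1` with respect to the uniform product measure. -/
theorem stmt12 (μ : Measure (ℕ → Bool)) (hμ : IsCantorMeasure μ) :
    sInf {c : Cardinal | ∃ X : Set (ℕ → Bool), μ X ≠ 0 ∧ c = #X} =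
    sInf {c : Cardinal | ∃ X : Set (ℕ → Bool), μ X = 1 ∧ c = #X} := by
  have hcyl : CylMeasure μ := hμ
  haveI := hcyl.prob
  haveI := hcyl.noAtoms
  apply le_antisymm
  · refine csInf_le_csInf (OrderBot.bddBelow _)
      ⟨#(univ : Set (ℕ → Bool)), univ, measure_univ, rfl⟩ ?_
    rintro c ⟨X, hX, rfl⟩
    exact ⟨X, by rw [hX]; exact one_ne_zero, rfl⟩
  · refine le_csInf ⟨#(univ : Set (ℕ → Bool)), univ, by simp, rfl⟩ ?_
    rintro c ⟨X, hX0, rfl⟩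
    -- X is uncountable
    have hXinf : ℵ₀ ≤ #X := by
      by_contra h
      push_neg at h
      have hc : X.Countable := Set.countable_coe_iff.mp (Cardinal.mk_le_aleph0_iff.mp h.le)
      exact hX0 (haveI : NullSingletonClass μ := hcyl.noAtoms; hc.measure_zero μ)
    set H := toMeasurable μ X with hH_def
    have hHmeas : MeasurableSet H := measurableSet_toMeasurable μ X
    have hH0 : μ H ≠ 0 := by rwa [hH_def, measure_toMeasurable]
    set gsq : ℕ → (ℕ → Bool) := gs μ H with hgsq
    set Y : Set (ℕ → Bool) := ⋃ n, τ (gsq n) ⁻¹' X with hY_def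
    set U : Set (ℕ → Bool) := ⋃ n, τ (gsq n) ⁻¹' H with hU_def
    have hUmeas : MeasurableSet U :=
      MeasurableSet.iUnion fun n => hHmeas.preimage (measurable_τ _)
    have hUone : μ U = 1 := mu_iUnion_gs (fun g {A} hA => hcyl.inv g hA) hHmeas hH0
    -- the outer measure of Y is 1
    set E := toMeasurable μ Y with hE_def
    have hEmeas : MeasurableSet E := measurableSet_toMeasurable μ Y
    have hYE : Y ⊆ E := subset_toMeasurable μ Y
    have hBn : ∀ n, μ (τ (gsq n) ⁻¹' H ∩ Eᶜ) = 0 := by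
      intro n
      have hmeasEc : MeasurableSet (τ (gsq n) ⁻¹' Eᶜ) := hEmeas.compl.preimage (measurable_τ _)
      have hsub : X ∩ τ (gsq n) ⁻¹' Eᶜ = ∅ := by
        ext x
        simp only [mem_inter_iff, mem_preimage, mem_compl_iff, mem_empty_iff_false,
          iff_false, not_and]
        intro hxX hxE
        refine hxE (hYE ?_)
        rw [hY_def]
        refine mem_iUnion.mpr ⟨n, ?_⟩
        show τ (gsq n) (τ (gsq n) x) ∈ X
        rwa [τ_τ]
      have h2 : τ (gsq n) ⁻¹' H ∩ Eᶜ = τ (gsq n) ⁻¹' (H ∩ τ (gsq n) ⁻¹' Eᶜ) := by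
        rw [preimage_inter, τ_preimage_preimage]
      rw [h2, hcyl.inv _ (hHmeas.inter hmeasEc), hH_def,
        Measure.measure_toMeasurable_inter hmeasEc (measure_ne_top μ X), hsub, measure_empty]
    have hEc : μ Eᶜ = 0 := by
      have hsplit : Eᶜ ⊆ (⋃ n, τ (gsq n) ⁻¹' H ∩ Eᶜ) ∪ Uᶜ := by
        intro x hx
        by_cases hxU : x ∈ U
        · left
          obtain ⟨n, hn⟩ := mem_iUnion.mp hxU
          exact mem_iUnion.mpr ⟨n, hn, hx⟩
        · right; exact hxU
      have h1 : μ (⋃ n, τ (gsq n) ⁻¹' H ∩ Eᶜ) = 0 := measure_iUnion_null hBn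
      have h2 : μ Uᶜ = 0 := (prob_compl_eq_zero_iff hUmeas).mpr hUone
      exact le_antisymm
        ((measure_mono hsplit).trans (le_of_eq (measure_union_null h1 h2))) zero_le
    have hYone : μ Y = 1 := by
      rw [hY_def] at hE_def ⊢
      rw [← measure_toMeasurable, ← hE_def]
      exact (prob_compl_eq_zero_iff hEmeas).mp hEc
    -- cardinality bound
    have hcard : #Y ≤ #X := by
      calc #Y ≤ #ℕ * ⨆ n, #(τ (gsq n) ⁻¹' X) := Cardinal.mk_iUnion_le _
        _ ≤ ℵ₀ * #X := by
            rw [Cardinal.mk_nat]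
            exact mul_le_mul_right
              (ciSup_le' fun n => Cardinal.mk_preimage_of_injective _ _ (τ_injective _)) _
        _ = #X := Cardinal.aleph0_mul_eq hXinf
    exact le_trans (csInf_le (OrderBot.bddBelow _) ⟨Y, hYone, rfl⟩) hcard
end

section
/- Fix an increasing function f : ℕ → ℕ with f(0) ≥ 2. For ζ admissible with dom(ζ) = n and any k with n ≤ k, the number of ζ-available vertices in 2^{[f(k)]} is exactly (1/2 + 1/2^{n+1})·2^{f(k)}. -/
/-- `t` extends `s` (as a function on an initial segment of `ℕ`). -/
def ExtendsStr {m m' : ℕ} (t : Fin m' → Bool) (s : Fin m → Bool) : Prop :=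
  ∀ (i : ℕ) (h : i < m) (h' : i < m'), t ⟨i, h'⟩ = s ⟨i, h⟩

open Finset

open Classical in
noncomputable def cone (M : ℕ) {m : ℕ} (t : Fin m → Bool) : Finset (Fin M → Bool) :=
  Finset.univ.filter (fun s => ExtendsStr s t)

lemma mem_cone {M m : ℕ} (t : Fin m → Bool) (s : Fin M → Bool) :
    s ∈ cone M t ↔ ExtendsStr s t := by
  simp [cone]

lemma card_cone {m M : ℕ} (h : m ≤ M) (t : Fin m → Bool) :
    (cone M t).card = 2 ^ (M - m) := by
  have key : (cone M t).card = (Finset.univ : Finset (Fin (M - m) → Bool)).card := by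
    apply Finset.card_bij' (fun s _ => fun j : Fin (M - m) => s ⟨m + j.1, by omega⟩)
      (fun g _ => fun x : Fin M => if hx : x.1 < m then t ⟨x.1, hx⟩ else g ⟨x.1 - m, by omega⟩)
    · intro s hs
      rw [mem_cone] at hs
      funext x
      by_cases hx : x.1 < m
      · simp only [dif_pos hx]
        exact (hs x.1 hx x.2).symm
      · simp only [dif_neg hx]
        congr 1
        exact Fin.ext (by simp; omega)
    · intro g _
      funext j
      have hj : ¬ (m + j.1 < m) := by omega
      simp only [dif_neg hj]
      congr 1
      exact Fin.ext (by simp)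
    · intro s hs; exact Finset.mem_univ _
    · intro g _
      rw [mem_cone]
      intro i hi hi'
      simp [hi]
  rw [key]
  simp [Finset.card_univ]

lemma geom_nat (M : ℕ) : ∀ n, n + 1 ≤ M →
    ∑ i ∈ Finset.range n, 2 ^ (M - i - 2) = 2 ^ (M - n - 1) * (2 ^ n - 1) := by
  intro n
  induction n with
  | zero => simp
  | succ n ih =>
    intro hM
    rw [Finset.sum_range_succ, ih (by omega)]
    have h1 : M - n - 1 = (M - n - 2) + 1 := by omega
    have h2 : M - (n+1) - 1 = M - n - 2 := by omega
    have hp : 1 ≤ 2 ^ n := Nat.one_le_two_pow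
    obtain ⟨c, hc⟩ := Nat.exists_eq_add_of_le hp
    rw [h1, h2, pow_succ, pow_succ, hc]
    have e1 : 1 + c - 1 = c := by omega
    have e2 : (1 + c) * 2 - 1 = 2 * c + 1 := by omega
    rw [e1, e2]
    ring

lemma cone_disjoint_of_ne {m M : ℕ} (h : m ≤ M) {t t' : Fin m → Bool} (hne : t ≠ t') :
    Disjoint (cone M t) (cone M t') := by
  rw [Finset.disjoint_left]
  intro s hs hs'
  rw [mem_cone] at hs hs'
  apply hne
  funext i
  have h1 := hs i.1 i.2 (lt_of_lt_of_le i.2 h)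
  have h2 := hs' i.1 i.2 (lt_of_lt_of_le i.2 h)
  rw [Fin.eta] at h1 h2
  rw [← h1, ← h2]

/-- `ζ` (with domain `n`) is admissible for `f`: each `ζ i` is a subset of `2^{[f i]}` of
size `2^{f i − i − 2}` (i.e. a member of `D^f_i`), and for `i < j` no member of `ζ j`
extends a member of `ζ i`. -/
def Admissible (f : ℕ → ℕ) {n : ℕ} (ζ : (i : Fin n) → Finset (Fin (f i) → Bool)) : Prop :=
  (∀ i : Fin n, (ζ i).card = 2 ^ (f i - i - 2)) ∧
  ∀ i j : Fin n, i < j → ∀ s ∈ ζ i, ∀ t ∈ ζ j, ¬ ExtendsStr t s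

/-- A vertex `s ∈ 2^{[f k]}` is `ζ`-available if it extends no member of any `ζ i`. -/
def Available (f : ℕ → ℕ) {n : ℕ} (ζ : (i : Fin n) → Finset (Fin (f i) → Bool))
    {k : ℕ} (s : Fin (f k) → Bool) : Prop :=
  ∀ i : Fin n, ∀ t ∈ ζ i, ¬ ExtendsStr s t

/-- Claim: the number of `ζ`-available vertices at level `f k` is exactly
`(1/2 + 1/2^{n+1})·2^{f k}`. -/
theorem stmt16 (f : ℕ → ℕ) (hmono : StrictMono f) (hf0 : 2 ≤ f 0)
    {n : ℕ} (k : ℕ) (hnk : n ≤ k) (ζ : (i : Fin n) → Finset (Fin (f i) → Bool))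
    (hζ : Admissible f ζ) :
    (Nat.card {s : Fin (f k) → Bool // Available f ζ s} : ℚ) =
      (1 / 2 + 1 / 2 ^ (n + 1)) * 2 ^ (f k) := by
  classical
  obtain ⟨hcard, hadm⟩ := hζ
  have hlin : ∀ i : ℕ, f 0 + i ≤ f i := by
    intro i
    induction i with
    | zero => simp
    | succ i ih =>
      have h2 : f i < f (i + 1) := hmono (by omega)
      have h3 : f i < f i.succ := h2
      omega
  have hfi : ∀ i : Fin n, (i : ℕ) + 2 ≤ f i := fun i => by have := hlin i; omega
  have hfiM : ∀ i : Fin n, f i ≤ f k := by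
    intro i
    exact hmono.le_iff_le.mpr (by omega)
  have hMn : n + 1 ≤ f k := by
    have h1 := hlin n
    have h2 : f n ≤ f k := hmono.le_iff_le.mpr hnk
    omega
  set M := f k with hMdef
  set B : Finset (Fin M → Bool) :=
    Finset.univ.biUnion (fun i : Fin n => (ζ i).biUnion (fun t => cone M t)) with hB
  -- disjointness of cones from different levels
  have hcross : ∀ i j : Fin n, i < j →
      Disjoint ((ζ i).biUnion fun t => cone M t) ((ζ j).biUnion fun t => cone M t) := by
    intro i j hij
    rw [Finset.disjoint_left]
    intro s hs hs'
    simp only [Finset.mem_biUnion, mem_cone] at hs hs'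
    obtain ⟨t, ht, hst⟩ := hs
    obtain ⟨t', ht', hst'⟩ := hs'
    refine hadm i j hij t ht t' ht' ?_
    intro a ha ha'
    exact (hst' a ha' (lt_of_lt_of_le ha' (hfiM j))).symm.trans
      (hst a ha (lt_of_lt_of_le ha' (hfiM j)))
  have hdisj : ∀ i ∈ (Finset.univ : Finset (Fin n)), ∀ j ∈ Finset.univ, i ≠ j →
      Disjoint ((ζ i).biUnion fun t => cone M t) ((ζ j).biUnion fun t => cone M t) := by
    intro i _ j _ hne
    rcases lt_or_gt_of_ne hne with h | h
    · exact hcross i j h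
    · exact (hcross j i h).symm
  have hBcard : B.card = 2 ^ (M - n - 1) * (2 ^ n - 1) := by
    rw [hB, Finset.card_biUnion hdisj]
    have inner : ∀ i : Fin n, ((ζ i).biUnion fun t => cone M t).card = 2 ^ (M - (i : ℕ) - 2) := by
      intro i
      rw [Finset.card_biUnion (fun t _ t' _ hne => cone_disjoint_of_ne (hfiM i) hne)]
      have : ∀ t ∈ ζ i, (cone M t).card = 2 ^ (M - f i) :=
        fun t _ => card_cone (hfiM i) t
      rw [Finset.sum_congr rfl this, Finset.sum_const, hcard i, smul_eq_mul, ← pow_add]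
      congr 1
      have := hfi i
      have := hfiM i
      omega
    rw [Finset.sum_congr rfl (fun i _ => inner i), Fin.sum_univ_eq_sum_range (fun a => 2 ^ (M - a - 2)) n, geom_nat M n hMn]
  -- availability is complement of B
  have hAv : ∀ s : Fin M → Bool, Available f ζ s ↔ s ∉ B := by
    intro s
    have hmem : s ∈ B ↔ ∃ i, ∃ t ∈ ζ i, ExtendsStr s t := by
      simp [hB, mem_cone]
    unfold Available
    rw [hmem]
    push_neg
    tauto
  have hNat : Nat.card {s : Fin M → Bool // Available f ζ s} = 2 ^ M - B.card := by
    rw [Nat.card_eq_fintype_card, Fintype.card_subtype]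
    have : Finset.univ.filter (fun s : Fin M → Bool => Available f ζ s) = Bᶜ := by
      ext s
      simp [hAv s]
    rw [this, Finset.card_compl]
    congr 1
    simp [Fintype.card_fun]
  have hval : 2 ^ M - B.card = 2 ^ (M - n - 1) * (2 ^ n + 1) := by
    rw [hBcard]
    have h2M : 2 ^ M = 2 ^ (M - n - 1) * 2 ^ (n + 1) := by
      rw [← pow_add]
      congr 1
      omega
    rw [h2M]
    have hp : 1 ≤ 2 ^ n := Nat.one_le_two_pow
    have hpow : (2 : ℕ) ^ (n + 1) = 2 * 2 ^ n := by rw [pow_succ]; ring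
    rw [hpow, ← Nat.mul_sub]
    congr 1
    omega
  rw [hNat, hval]
  push_cast
  have h2M : (2 : ℚ) ^ M = 2 ^ (M - n - 1) * 2 ^ (n + 1) := by
    rw [← pow_add]
    congr 1
    omega
  rw [h2M]
  have hp : (2 : ℚ) ^ (n + 1) = 2 * 2 ^ n := by rw [pow_succ]; ring
  rw [hp]
  have hne : (2 : ℚ) ^ n ≠ 0 := by positivity
  field_simp
end

section
/- Fix an increasing function f : ℕ → ℕ with f(0) ≥ 2, and let Ad(k) denote the set of admissible functions with domain k. If n < k and s ∈ 2^{[f(n)]}, then |{ζ ∈ Ad(k) : s ∈ ζ(n)}| = (1/2^{n+2})·|Ad(k)|; in particular this number does not depend on the choice of s. -/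
namespace Stmt17Aux

/-- Translation by a global bit-string `x`. -/
def tr (x : ℕ → Bool) {m : ℕ} (t : Fin m → Bool) : Fin m → Bool :=
  fun i => xor (t i) (x i)

lemma tr_tr (x : ℕ → Bool) {m : ℕ} (t : Fin m → Bool) : tr x (tr x t) = t := by
  funext i; simp [tr]

lemma tr_inj (x : ℕ → Bool) {m : ℕ} : Function.Injective (tr x (m := m)) :=
  Function.LeftInverse.injective (tr_tr x)

lemma extends_tr (x : ℕ → Bool) {m m' : ℕ} {t : Fin m' → Bool} {s : Fin m → Bool}
    (h : ExtendsStr t s) : ExtendsStr (tr x t) (tr x s) := by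
  intro i hm hm'
  simp only [tr, h i hm hm']

lemma extends_tr_iff (x : ℕ → Bool) {m m' : ℕ} (t : Fin m' → Bool) (s : Fin m → Bool) :
    ExtendsStr (tr x t) (tr x s) ↔ ExtendsStr t s := by
  constructor
  · intro h
    have := extends_tr x h
    rwa [tr_tr, tr_tr] at this
  · exact extends_tr x

variable {f : ℕ → ℕ} {k : ℕ}

/-- Translation acting on a `ζ`. -/
def trZ (x : ℕ → Bool) (ζ : (i : Fin k) → Finset (Fin (f i) → Bool)) :
    (i : Fin k) → Finset (Fin (f i) → Bool) :=
  fun i => (ζ i).image (tr x)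

lemma mem_trZ (x : ℕ → Bool) (ζ : (i : Fin k) → Finset (Fin (f i) → Bool))
    (i : Fin k) (u : Fin (f i) → Bool) : u ∈ trZ x ζ i ↔ tr x u ∈ ζ i := by
  constructor
  · rintro h
    rcases Finset.mem_image.1 h with ⟨a, ha, rfl⟩
    rwa [tr_tr]
  · intro h
    exact Finset.mem_image.2 ⟨tr x u, h, tr_tr x u⟩

lemma trZ_trZ (x : ℕ → Bool) (ζ : (i : Fin k) → Finset (Fin (f i) → Bool)) :
    trZ x (trZ x ζ) = ζ := by
  funext i
  simp [trZ, Finset.image_image, Function.comp_def, tr_tr]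

lemma admissible_trZ (x : ℕ → Bool) (ζ : (i : Fin k) → Finset (Fin (f i) → Bool))
    (h : Admissible f ζ) : Admissible f (trZ x ζ) := by
  obtain ⟨h1, h2⟩ := h
  constructor
  · intro i
    rw [trZ, Finset.card_image_of_injective _ (tr_inj x), h1 i]
  · intro i j hij s hs t ht hext
    rcases Finset.mem_image.1 hs with ⟨s', hs', rfl⟩
    rcases Finset.mem_image.1 ht with ⟨t', ht', rfl⟩
    exact h2 i j hij s' hs' t' ht' ((extends_tr_iff x t' s').1 hext)

lemma admissible_trZ_iff (x : ℕ → Bool) (ζ : (i : Fin k) → Finset (Fin (f i) → Bool)) :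
    Admissible f (trZ x ζ) ↔ Admissible f ζ := by
  constructor
  · intro h
    have := admissible_trZ x _ h
    rwa [trZ_trZ] at this
  · exact admissible_trZ x ζ

lemma le_fn_aux {f : ℕ → ℕ} (hmono : StrictMono f) (m : ℕ) : m + f 0 ≤ f m := by
  induction m with
  | zero => simp
  | succ j ih =>
    have := hmono (show j < j + 1 by omega)
    show j + 1 + f 0 ≤ f (j + 1)
    omega

end Stmt17Aux

open Stmt17Aux in
/-- Claim: for `n < k` and `s ∈ 2^{[f n]}`, the number of admissible functions `ζ` with
domain `k` such that `s ∈ ζ(n)` is exactly `(1/2^{n+2})·|Ad(k)|`; in particular it does not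
depend on `s`. -/
theorem stmt17 (f : ℕ → ℕ) (hmono : StrictMono f) (hf0 : 2 ≤ f 0)
    (n k : ℕ) (hnk : n < k) (s : Fin (f n) → Bool) :
    (Nat.card {ζ : (i : Fin k) → Finset (Fin (f i) → Bool) //
        Admissible f ζ ∧ s ∈ ζ ⟨n, hnk⟩} : ℚ) =
      (1 / 2 ^ (n + 2)) *
        Nat.card {ζ : (i : Fin k) → Finset (Fin (f i) → Bool) // Admissible f ζ} := by
  classical
  set Z := (i : Fin k) → Finset (Fin (f i) → Bool) with hZ
  set A : Finset Z := Finset.univ.filter (fun ζ => Admissible f ζ) with hA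
  -- count with a given element of ζ n
  set N : (Fin (f n) → Bool) → ℕ :=
    fun t => (A.filter (fun ζ => t ∈ ζ ⟨n, hnk⟩)).card with hN
  -- N is constant
  have hconst : ∀ t : Fin (f n) → Bool, N t = N s := by
    intro t
    set x : ℕ → Bool := fun i => if h : i < f n then xor (t ⟨i, h⟩) (s ⟨i, h⟩) else false
      with hx
    have htr : tr x t = s := by
      funext i
      simp only [tr, hx, i.isLt, dif_pos]
      cases t i <;> cases s ⟨i, i.isLt⟩ <;> rfl
    apply Finset.card_bij' (fun ζ _ => trZ x ζ) (fun ζ _ => trZ x ζ)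
    · intro ζ hζ
      simp only [Finset.mem_filter, hA, Finset.mem_univ, true_and] at hζ ⊢
      refine ⟨admissible_trZ x ζ hζ.1, ?_⟩
      rw [mem_trZ]
      have : tr x s = t := by rw [← htr, tr_tr]
      rw [this]; exact hζ.2
    · intro ζ hζ
      simp only [Finset.mem_filter, hA, Finset.mem_univ, true_and] at hζ ⊢
      refine ⟨admissible_trZ x ζ hζ.1, ?_⟩
      rw [mem_trZ, htr]; exact hζ.2
    · intro ζ _; exact trZ_trZ x ζ
    · intro ζ _; exact trZ_trZ x ζ
  -- double counting
  have hdc : 2 ^ (f n) * N s = A.card * 2 ^ (f n - n - 2) := by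
    have h1 : ∑ t : Fin (f n) → Bool, N t = 2 ^ (f n) * N s := by
      rw [Finset.sum_congr rfl (fun t _ => hconst t), Finset.sum_const, smul_eq_mul]
      congr 1
      simp [Finset.card_univ]
    have h2 : ∑ t : Fin (f n) → Bool, N t = ∑ ζ ∈ A, (ζ ⟨n, hnk⟩).card := by
      simp only [hN, Finset.card_filter]
      rw [Finset.sum_comm]
      refine Finset.sum_congr rfl (fun ζ _ => ?_)
      rw [Finset.card_eq_sum_ones, ← Finset.sum_filter]
      congr 1
      ext u
      simp
    have h3 : ∑ ζ ∈ A, (ζ ⟨n, hnk⟩).card = A.card * 2 ^ (f n - n - 2) := by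
      rw [Finset.sum_congr rfl (fun ζ hζ => ?_), Finset.sum_const, smul_eq_mul]
      have : Admissible f ζ := (Finset.mem_filter.1 hζ).2
      exact this.1 ⟨n, hnk⟩
    rw [← h1, h2, h3]
  -- f n ≥ n + 2
  have hfn : n + 2 ≤ f n := by
    have := le_fn_aux hmono n
    omega
  have hsplit : (2 : ℕ) ^ (f n) = 2 ^ (f n - n - 2) * 2 ^ (n + 2) := by
    rw [← pow_add]
    congr 1
    omega
  have hkey : 2 ^ (n + 2) * N s = A.card := by
    have hpos : (0 : ℕ) < 2 ^ (f n - n - 2) := Nat.pow_pos (by norm_num)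
    have : 2 ^ (f n - n - 2) * (2 ^ (n + 2) * N s) = 2 ^ (f n - n - 2) * A.card := by
      rw [← mul_assoc, ← hsplit, hdc, mul_comm]
    exact Nat.eq_of_mul_eq_mul_left hpos this
  -- convert Nat.card to filter cards
  have hc1 : Nat.card {ζ : Z // Admissible f ζ ∧ s ∈ ζ ⟨n, hnk⟩} = N s := by
    rw [Nat.card_eq_fintype_card, Fintype.card_subtype]
    congr 1
    ext ζ
    simp [hA, Finset.filter_filter]
  have hc2 : Nat.card {ζ : Z // Admissible f ζ} = A.card := by
    rw [Nat.card_eq_fintype_card, Fintype.card_subtype]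
  rw [hc1, hc2, ← hkey]
  have h2 : ((2 : ℚ)) ^ (n + 2) ≠ 0 := by positivity
  push_cast
  field_simp
end

section
/- Fix an increasing function f : ℕ → ℕ with f(0) ≥ 2. If ζ and ξ are admissible functions with dom(ζ) = dom(ξ) = n, then ζ and ξ have the same number of admissible extensions with domain n+1; namely, each has exactly C(M, N) such extensions, where M = (1/2 + 1/2^{n+1})·2^{f(n)}, N = 2^{f(n)−n−2}, and C(M, N) is the binomial coefficient. -/
open Finset


open scoped Classical

lemma lem_le (f : ℕ → ℕ) (hmono : StrictMono f) (hf0 : 2 ≤ f 0) (i : ℕ) : i + 2 ≤ f i := by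
  induction i with
  | zero => simpa using hf0
  | succ k ih => have := hmono (show k < k + 1 by omega); omega

def extEquiv {m l : ℕ} (hlm : l ≤ m) (t : Fin l → Bool) :
    {s : Fin m → Bool // ExtendsStr s t} ≃ (Fin (m - l) → Bool) where
  toFun s j := s.1 ⟨l + j.1, by omega⟩
  invFun g := ⟨fun k => if h : k.1 < l then t ⟨k.1, h⟩ else g ⟨k.1 - l, by omega⟩,
    fun i h h' => by simp [h]⟩
  left_inv s := by
    apply Subtype.ext
    funext k
    dsimp only
    by_cases h : k.1 < l
    · simp only [h, dif_pos]
      exact (s.2 k.1 h k.isLt).symm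
    · rw [dif_neg h]
      have hk : l + (k.1 - l) = k.1 := by omega
      simp only [hk, Fin.eta]
  right_inv g := by
    funext j
    dsimp only
    have h : ¬ (l + j.1 < l) := by omega
    rw [dif_neg h]
    have hj : l + j.1 - l = j.1 := by omega
    simp only [hj, Fin.eta]

lemma card_ext {m l : ℕ} (hlm : l ≤ m) (t : Fin l → Bool) :
    (univ.filter (fun s : Fin m → Bool => ExtendsStr s t)).card = 2 ^ (m - l) := by
  rw [← Fintype.card_subtype]
  rw [Fintype.card_congr (extEquiv hlm t)]
  simp

lemma geom (m : ℕ) : ∀ n, n + 2 ≤ m →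
    (∑ i ∈ Finset.range n, 2 ^ (m - i - 2)) + 2 ^ (m - n - 1) * (2 ^ n + 1) = 2 ^ m := by
  intro n
  induction n with
  | zero =>
    intro h
    have e : 2 ^ m = 2 ^ (m - 0 - 1) * 2 := by rw [← pow_succ]; congr 1; omega
    simp only [Finset.range_zero, Finset.sum_empty, pow_zero, zero_add, e]
  | succ k ih =>
    intro h
    have ihh := ih (by omega)
    rw [Finset.sum_range_succ]
    have e1 : 2 ^ (m - k - 1) = 2 ^ (m - (k+1) - 1) * 2 := by rw [← pow_succ]; congr 1; omega
    have e2 : (2:ℕ) ^ (m - k - 2) = 2 ^ (m - (k+1) - 1) := by rw [Nat.sub_sub, Nat.sub_sub m (k+1)]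
    rw [e1] at ihh
    rw [e2]
    set a := (2:ℕ) ^ (m - (k+1) - 1)
    set S := ∑ i ∈ Finset.range k, 2 ^ (m - i - 2)
    calc S + a + a * (2 ^ (k+1) + 1) = S + a * 2 * (2 ^ k + 1) := by ring
    _ = 2 ^ m := ihh

open scoped Classical in
lemma card_avail (f : ℕ → ℕ) (hmono : StrictMono f) (hf0 : 2 ≤ f 0) {n : ℕ}
    (ζ : (i : Fin n) → Finset (Fin (f i) → Bool)) (hζ : Admissible f ζ) :
    (univ.filter (fun s : Fin (f n) → Bool => Available f ζ s)).card
      = 2 ^ (f n - n - 1) * (2 ^ n + 1) := by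
  classical
  have hfi : ∀ i : Fin n, f i < f n := fun i => hmono i.isLt
  set E : Fin n → Finset (Fin (f n) → Bool) :=
    fun i => (ζ i).biUnion (fun t => univ.filter (fun s : Fin (f n) → Bool => ExtendsStr s t))
    with hE
  -- complement description
  have hcompl : univ.filter (fun s : Fin (f n) → Bool => ¬ Available f ζ s)
      = univ.biUnion E := by
    ext s
    simp only [mem_filter, mem_univ, true_and, mem_biUnion, hE, Available]
    push_neg
    simp
  -- cards of E i
  have hcardE : ∀ i : Fin n, (E i).card = 2 ^ (f n - (i : ℕ) - 2) := by
    intro i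
    have h1 : (E i).card = ∑ t ∈ ζ i, 2 ^ (f n - f i) := by
      rw [hE]
      rw [Finset.card_biUnion]
      · exact Finset.sum_congr rfl fun t _ => card_ext (le_of_lt (hfi i)) t
      · intro t ht t' ht' htt'
        simp only [Function.onFun]
        rw [Finset.disjoint_left]
        intro s hs hs'
        simp only [mem_filter, mem_univ, true_and] at hs hs'
        apply htt'
        funext k
        have := hs k.1 k.isLt (lt_trans k.isLt (hfi i))
        have h2 := hs' k.1 k.isLt (lt_trans k.isLt (hfi i))
        rw [← this, ← h2]
    rw [h1, Finset.sum_const, hζ.1 i, smul_eq_mul, ← pow_add]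
    congr 1
    have := lem_le f hmono hf0 i
    have := le_of_lt (hfi i)
    omega
  -- disjointness of E i's
  have hdisj : ∀ i ∈ (univ : Finset (Fin n)), ∀ j ∈ univ, i ≠ j → Disjoint (E i) (E j) := by
    have key : ∀ i j : Fin n, i < j → Disjoint (E i) (E j) := by
      intro i j hij
      rw [Finset.disjoint_left]
      intro s hs hs'
      simp only [hE, mem_biUnion, mem_filter, mem_univ, true_and] at hs hs'
      obtain ⟨t, ht, hst⟩ := hs
      obtain ⟨t', ht', hst'⟩ := hs'
      refine hζ.2 i j hij t ht t' ht' ?_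
      intro k hk hk'
      have hkn : k < f n := lt_trans hk (hfi i)
      rw [← hst' k hk' hkn]; exact hst k hk hkn
    intro i _ j _ hij
    rcases lt_or_gt_of_ne hij with h | h
    · exact key i j h
    · exact (key j i h).symm
  -- total count
  have htot : (univ.filter (fun s : Fin (f n) → Bool => Available f ζ s)).card
      + (univ.biUnion E).card = 2 ^ (f n) := by
    rw [← hcompl, Finset.card_filter_add_card_filter_not]
    simp [Fintype.card_fun]
  have hU : (univ.biUnion E).card = ∑ i ∈ Finset.range n, 2 ^ (f n - i - 2) := by
    rw [Finset.card_biUnion hdisj]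
    rw [← Fin.sum_univ_eq_sum_range (fun i => 2 ^ (f n - i - 2))]
    exact Finset.sum_congr rfl fun i _ => hcardE i
  have hgeom := geom (f n) n (lem_le f hmono hf0 n)
  omega

open scoped Classical in
lemma count_ext (f : ℕ → ℕ) (hmono : StrictMono f) (hf0 : 2 ≤ f 0) {n : ℕ}
    (ζ : (i : Fin n) → Finset (Fin (f i) → Bool)) (hζ : Admissible f ζ) :
    Nat.card {ζ' : (i : Fin (n + 1)) → Finset (Fin (f i) → Bool) //
        Admissible f ζ' ∧ ∀ i : Fin n, ζ' i.castSucc = ζ i}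
      = (2 ^ (f n - n - 1) * (2 ^ n + 1)).choose (2 ^ (f n - n - 2)) := by
  classical
  set Av : Finset (Fin (f n) → Bool) :=
    univ.filter (fun s : Fin (f n) → Bool => Available f ζ s) with hAv
  set N := 2 ^ (f n - n - 2) with hN
  have e : {ζ' : (i : Fin (n + 1)) → Finset (Fin (f i) → Bool) //
        Admissible f ζ' ∧ ∀ i : Fin n, ζ' i.castSucc = ζ i}
      ≃ {A : Finset (Fin (f n) → Bool) // A ∈ Av.powersetCard N} :=
  { toFun := fun ζ' => ⟨ζ'.1 (Fin.last n), by
      rw [Finset.mem_powersetCard]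
      constructor
      · intro s hs
        rw [hAv, Finset.mem_filter]
        refine ⟨Finset.mem_univ s, ?_⟩
        intro i t ht hext
        exact ζ'.2.1.2 i.castSucc (Fin.last n) (Fin.castSucc_lt_last i) t
          (by rw [ζ'.2.2 i]; exact ht) s hs hext
      · have := ζ'.2.1.1 (Fin.last n)
        simpa using this⟩
    invFun := fun A =>
      ⟨Fin.lastCases (motive := fun i : Fin (n+1) => Finset (Fin (f i) → Bool)) A.1 ζ, by
        have hA := Finset.mem_powersetCard.1 A.2
        constructor
        · intro i
          induction i using Fin.lastCases with
          | last => simpa [Fin.lastCases_last] using hA.2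
          | cast i => simpa [Fin.lastCases_castSucc] using hζ.1 i
        · intro i j hij s hs t ht hext
          induction j using Fin.lastCases with
          | last =>
            obtain ⟨i', rfl⟩ := Fin.exists_castSucc_eq.2 (Fin.ne_last_of_lt hij)
            rw [Fin.lastCases_castSucc] at hs
            rw [Fin.lastCases_last] at ht
            have hav := (Finset.mem_filter.1 (hA.1 ht)).2
            exact hav i' s hs hext
          | cast j' =>
            obtain ⟨i', rfl⟩ := Fin.exists_castSucc_eq.2 (Fin.ne_last_of_lt hij)
            rw [Fin.lastCases_castSucc] at hs ht
            exact hζ.2 i' j' (by exact (Fin.castSucc_lt_castSucc_iff).1 hij) s hs t ht hext,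
        fun i => Fin.lastCases_castSucc (motive := fun i : Fin (n+1) => Finset (Fin (f i) → Bool)) (i := i)⟩
    left_inv := fun ζ' => by
      apply Subtype.ext
      funext i
      dsimp only
      induction i using Fin.lastCases with
      | last => exact Fin.lastCases_last
      | cast i => rw [Fin.lastCases_castSucc]; exact (ζ'.2.2 i).symm
    right_inv := fun A => by
      apply Subtype.ext
      dsimp only
      exact Fin.lastCases_last }
  rw [Nat.card_congr e, Nat.card_eq_fintype_card, Fintype.card_coe,
    Finset.card_powersetCard, card_avail f hmono hf0 ζ hζ]


/-- Claim: any two admissible functions with domain `n` have the same number of admissible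
extensions with domain `n+1`, namely `C(M, N)` where `M = (1/2 + 1/2^{n+1})·2^{f n}` and
`N = 2^{f n − n − 2}`. -/
theorem stmt18 (f : ℕ → ℕ) (hmono : StrictMono f) (hf0 : 2 ≤ f 0)
    {n : ℕ} (ζ ξ : (i : Fin n) → Finset (Fin (f i) → Bool))
    (hζ : Admissible f ζ) (hξ : Admissible f ξ) :
    Nat.card {ζ' : (i : Fin (n + 1)) → Finset (Fin (f i) → Bool) //
        Admissible f ζ' ∧ ∀ i : Fin n, ζ' i.castSucc = ζ i} =
      Nat.card {ξ' : (i : Fin (n + 1)) → Finset (Fin (f i) → Bool) //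
        Admissible f ξ' ∧ ∀ i : Fin n, ξ' i.castSucc = ξ i} ∧
    ∀ M N : ℕ, (M : ℚ) = (1 / 2 + 1 / 2 ^ (n + 1)) * 2 ^ (f n) → N = 2 ^ (f n - n - 2) →
      Nat.card {ζ' : (i : Fin (n + 1)) → Finset (Fin (f i) → Bool) //
        Admissible f ζ' ∧ ∀ i : Fin n, ζ' i.castSucc = ζ i} = M.choose N := by
  have hfn := lem_le f hmono hf0 n
  have hc : ∀ M : ℕ, (M : ℚ) = (1 / 2 + 1 / 2 ^ (n + 1)) * 2 ^ (f n) →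
      M = 2 ^ (f n - n - 1) * (2 ^ n + 1) := by
    intro M hM
    have key : ((2 ^ (f n - n - 1) * (2 ^ n + 1) : ℕ) : ℚ)
        = (1 / 2 + 1 / 2 ^ (n + 1)) * 2 ^ (f n) := by
      have h2 : (2:ℚ) ^ (f n) = 2 ^ (f n - n - 1) * 2 ^ (n+1) := by
        rw [← pow_add]; congr 1; omega
      push_cast
      rw [h2]
      field_simp
      ring
    exact_mod_cast hM.trans key.symm
  refine ⟨?_, ?_⟩
  · rw [count_ext f hmono hf0 ζ hζ, count_ext f hmono hf0 ξ hξ]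
  · intro M N hM hN
    rw [count_ext f hmono hf0 ζ hζ, hc M hM, hN]
end
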